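/- arXiv:2312.16505 — 5 statements merged into one kernel-verified Lean document; each statement's English description precedes it below -/
import Mathlib

section
/- Let 𝒜 = ℳ - 𝒩 be an H-splitting of a square complex matrix 𝒜 of size n×n. Then ℳ is invertible and ρ(|I - ℳ⁻¹𝒜|) < 1. -/
open Matrix

/-- Spectral radius of a real square matrix: the supremum of the moduli of its
complex eigenvalues. -/
noncomputable def specRad {m : Type*} [Fintype m] [DecidableEq m]
    (A : Matrix m m ℝ) : ℝ :=
  sSup ((fun z : ℂ => ‖z‖) '' spectrum ℂ (A.map Complex.ofReal))

/-- Entrywise absolute value (modulus) of a complex matrix. -/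
noncomputable def cabs {m l : Type*} (A : Matrix m l ℂ) : Matrix m l ℝ :=
  fun i j => ‖A i j‖

/-- Comparison matrix of a complex square matrix. -/
noncomputable def compMat {m : Type*} [DecidableEq m]
    (A : Matrix m m ℂ) : Matrix m m ℝ :=
  fun i j => if i = j then ‖A i j‖ else -‖A i j‖

/-- M-matrix: there is `α` with `α I - A ≥ 0` entrywise and `α > ρ(α I - A)`. -/
def IsMMat {m : Type*} [Fintype m] [DecidableEq m]
    (A : Matrix m m ℝ) : Prop :=
  ∃ α : ℝ, (∀ i j, 0 ≤ (α • (1 : Matrix m m ℝ) - A) i j) ∧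
    specRad (α • (1 : Matrix m m ℝ) - A) < α

open Finset Filter Topology
open scoped ENNReal NNReal

section Aux
variable {n : ℕ}

lemma specRad_nonneg' {m : Type*} [Fintype m] [DecidableEq m] (A : Matrix m m ℝ) :
    0 ≤ specRad A :=
  Real.sSup_nonneg (by rintro r ⟨z, -, rfl⟩; exact norm_nonneg z)

lemma abs_le_specRad' {m : Type*} [Fintype m] [DecidableEq m] {A : Matrix m m ℝ}
    {z : ℂ} (hz : z ∈ spectrum ℂ (A.map Complex.ofReal)) :
    ‖z‖ ≤ specRad A :=
  le_csSup ((A.map Complex.ofReal).finite_spectrum.image _).bddAbove ⟨z, hz, rfl⟩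

lemma specRad_lt_one_of_forall' {m : Type*} [Fintype m] [DecidableEq m] {A : Matrix m m ℝ}
    (h : ∀ z ∈ spectrum ℂ (A.map Complex.ofReal), ‖z‖ < 1) :
    specRad A < 1 := by
  set S := (fun z : ℂ => ‖z‖) '' spectrum ℂ (A.map Complex.ofReal) with hS
  rcases S.eq_empty_or_nonempty with he | hne
  · rw [specRad, ← hS, he, Real.sSup_empty]; norm_num
  · have hfin : S.Finite := (A.map Complex.ofReal).finite_spectrum.image _
    obtain ⟨z, hz, hzz⟩ := hne.csSup_mem hfin
    rw [specRad, ← hS, ← hzz]; exact h z hz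

lemma exists_eigvec' {B : Matrix (Fin n) (Fin n) ℂ} {z : ℂ}
    (hz : z ∈ spectrum ℂ B) : ∃ v : Fin n → ℂ, v ≠ 0 ∧ B *ᵥ v = z • v := by
  rw [spectrum.mem_iff] at hz
  have hdet : (algebraMap ℂ (Matrix (Fin n) (Fin n) ℂ) z - B).det = 0 := by
    by_contra hd
    exact hz ((Matrix.isUnit_iff_isUnit_det _).mpr (isUnit_iff_ne_zero.mpr hd))
  obtain ⟨v, hv0, hv⟩ := (Matrix.exists_mulVec_eq_zero_iff).mpr hdet
  refine ⟨v, hv0, ?_⟩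
  have h2 : (algebraMap ℂ (Matrix (Fin n) (Fin n) ℂ) z) *ᵥ v = z • v := by
    rw [Algebra.algebraMap_eq_smul_one, Matrix.smul_mulVec, Matrix.one_mulVec]
  have h3 : (algebraMap ℂ (Matrix (Fin n) (Fin n) ℂ) z) *ᵥ v - B *ᵥ v = 0 := by
    rw [← Matrix.sub_mulVec, hv]
  rw [h2, sub_eq_zero] at h3
  exact h3.symm

lemma eig_lt_one' {B : Matrix (Fin n) (Fin n) ℝ} (hB : ∀ i j, 0 ≤ B i j)
    {x : Fin n → ℝ} (hx : ∀ i, 0 < x i) (hBx : ∀ i, (B *ᵥ x) i < x i)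
    {z : ℂ} (hv' : ∃ v : Fin n → ℂ, v ≠ 0 ∧ (B.map Complex.ofReal) *ᵥ v = z • v) :
    ‖z‖ < 1 := by
  obtain ⟨v, hv0, hv⟩ := hv'
  obtain ⟨k0, hk0⟩ := Function.ne_iff.mp hv0
  obtain ⟨k, -, hk⟩ := Finset.exists_max_image univ (fun j => ‖(v j)‖ / x j)
    ⟨k0, mem_univ k0⟩
  set c := ‖(v k)‖ / x k with hc
  have hc0 : 0 < c :=
    lt_of_lt_of_le (div_pos (by simpa using hk0) (hx k0)) (hk k0 (mem_univ k0))
  have hcb : ∀ j, ‖(v j)‖ ≤ c * x j := fun j =>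
    (div_le_iff₀ (hx j)).mp (hk j (mem_univ j))
  have hvk : ‖(v k)‖ = c * x k := by
    rw [hc, div_mul_comm, div_self (hx k).ne', one_mul]
  have hrow : ((B.map Complex.ofReal) *ᵥ v) k = z * v k := by rw [hv]; rfl
  have hentry : ((B.map Complex.ofReal) *ᵥ v) k = ∑ j, (Complex.ofReal (B k j)) * v j := by
    simp [Matrix.mulVec, dotProduct, Matrix.map_apply]
  have hsum : ‖(∑ j, (Complex.ofReal (B k j)) * v j)‖ ≤ c * (B *ᵥ x) k := by
    refine le_trans (norm_sum_le _ _) ?_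
    have h1 : ∀ j, ‖((Complex.ofReal (B k j)) * v j)‖ ≤ B k j * (c * x j) := by
      intro j
      rw [norm_mul, Complex.norm_real, Real.norm_eq_abs, abs_of_nonneg (hB k j)]
      exact mul_le_mul_of_nonneg_left (hcb j) (hB k j)
    refine le_trans (Finset.sum_le_sum fun j _ => h1 j) (le_of_eq ?_)
    simp only [Matrix.mulVec, dotProduct, Finset.mul_sum]
    exact Finset.sum_congr rfl fun j _ => by ring
  have hZ : ‖z‖ * (c * x k) ≤ c * (B *ᵥ x) k := by
    calc ‖z‖ * (c * x k) = ‖(z * v k)‖ := by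
          rw [norm_mul, hvk]
      _ = ‖(∑ j, (Complex.ofReal (B k j)) * v j)‖ := by rw [← hrow, hentry]
      _ ≤ c * (B *ᵥ x) k := hsum
  have hlt : ‖z‖ * (c * x k) < 1 * (c * x k) := by
    rw [one_mul]
    exact lt_of_le_of_lt hZ ((mul_lt_mul_iff_right₀ hc0).mpr (hBx k))
  exact lt_of_mul_lt_mul_right hlt (le_of_lt (mul_pos hc0 (hx k)))

/-- If `B ≥ 0` entrywise, `x > 0`, and `B x < x` entrywise, then `specRad B < 1`. -/
lemma specRad_lt_one' {B : Matrix (Fin n) (Fin n) ℝ} (hB : ∀ i j, 0 ≤ B i j)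
    {x : Fin n → ℝ} (hx : ∀ i, 0 < x i) (hBx : ∀ i, (B *ᵥ x) i < x i) :
    specRad B < 1 :=
  specRad_lt_one_of_forall' fun z hz => eig_lt_one' hB hx hBx (exists_eigvec' hz)

attribute [local instance] Matrix.linftyOpNormedAddCommGroup Matrix.linftyOpNormedRing
  Matrix.linftyOpNormedAlgebra

instance : CompleteSpace (Matrix (Fin n) (Fin n) ℂ) :=
  inferInstance

/-- From an M-matrix `C`, produce a positive vector `x` with `C x > 0` entrywise. -/
lemma exists_pos_vec' {C : Matrix (Fin n) (Fin n) ℝ} (h : IsMMat C) :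
    ∃ x : Fin n → ℝ, (∀ i, 0 < x i) ∧ (∀ i, 0 < (C *ᵥ x) i) := by
  obtain ⟨α, hP, hsr⟩ := h
  set P : Matrix (Fin n) (Fin n) ℝ := α • (1 : Matrix (Fin n) (Fin n) ℝ) - C with hPdef
  have hα : 0 < α := lt_of_le_of_lt (specRad_nonneg' P) hsr
  set Q : Matrix (Fin n) (Fin n) ℝ := α⁻¹ • P with hQdef
  have hQ : ∀ i j, 0 ≤ Q i j := fun i j =>
    mul_nonneg (inv_nonneg.mpr hα.le) (hP i j)
  set Q' : Matrix (Fin n) (Fin n) ℂ := Q.map Complex.ofReal with hQ'def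
  have hQP' : Q' = ((α⁻¹ : ℝ) : ℂ) • (P.map Complex.ofReal) := by
    ext i j
    simp [hQ'def, hQdef, Matrix.map_apply]
  have hspec : ∀ μ ∈ spectrum ℂ Q', ‖μ‖ ≤ specRad P / α := by
    intro μ hμ
    have hαC : ((α⁻¹ : ℝ) : ℂ) ≠ 0 := by
      simp [Complex.ofReal_ne_zero, inv_ne_zero hα.ne', hα.ne']
    set r : ℂˣ := Units.mk0 _ hαC with hr
    have hμ' : r • ((r⁻¹ : ℂˣ) • μ) ∈ spectrum ℂ (r • (P.map Complex.ofReal)) := by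
      rw [smul_inv_smul]
      simpa [hr, Units.smul_def, hQP'] using hμ
    have hmem := (spectrum.smul_mem_smul_iff (a := P.map Complex.ofReal)
      (s := (r⁻¹ : ℂˣ) • μ) (r := r)).mp hμ'
    have habs := abs_le_specRad' hmem
    have hval : (r⁻¹ : ℂˣ) • μ = ((α : ℝ) : ℂ) * μ := by
      simp only [hr, Units.smul_def, Units.val_inv_eq_inv_val, Units.val_mk0, smul_eq_mul]
      rw [← Complex.ofReal_inv, inv_inv]
    rw [hval] at habs
    rw [norm_mul, Complex.norm_real, Real.norm_eq_abs, abs_of_pos hα] at habs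
    rw [div_eq_inv_mul, ← mul_le_mul_iff_right₀ hα, ← mul_assoc, mul_inv_cancel₀ hα.ne', one_mul]
    exact habs
  have hsr1 : spectralRadius ℂ Q' < 1 := by
    have hub : spectralRadius ℂ Q' ≤ ENNReal.ofReal (specRad P / α) := by
      rw [spectralRadius]
      refine iSup₂_le fun k hk => ?_
      rw [← enorm_eq_nnnorm, ← ofReal_norm]
      exact ENNReal.ofReal_le_ofReal (by simpa using hspec k hk)
    refine lt_of_le_of_lt hub ?_
    rw [ENNReal.ofReal_lt_one]
    exact (div_lt_one hα).mpr hsr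
  obtain ⟨t, ht1, ht2⟩ := ENNReal.lt_iff_exists_nnreal_btwn.mp hsr1
  have hG := spectrum.pow_nnnorm_pow_one_div_tendsto_nhds_spectralRadius Q'
  have hev : ∀ᶠ m : ℕ in atTop, (‖Q' ^ m‖₊ : ℝ≥0∞) ^ (1/(m:ℝ)) < (t : ℝ≥0∞) :=
    hG.eventually_lt_const ht1
  obtain ⟨M₀, hM₀⟩ := eventually_atTop.mp (hev.and (eventually_ge_atTop 1))
  have hkey : ∀ m, M₀ ≤ m → ‖Q' ^ m‖₊ ≤ t ^ m := by
    intro m hm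
    obtain ⟨h1, h2⟩ := hM₀ m hm
    have hm0 : (m : ℝ) ≠ 0 := by positivity
    have he : (‖Q' ^ m‖₊ : ℝ≥0∞) = ((‖Q' ^ m‖₊ : ℝ≥0∞) ^ (1/(m:ℝ))) ^ (m:ℝ) := by
      rw [← ENNReal.rpow_mul, one_div, inv_mul_cancel₀ hm0, ENNReal.rpow_one]
    have hle : (‖Q' ^ m‖₊ : ℝ≥0∞) ≤ (t : ℝ≥0∞) ^ (m:ℝ) := by
      rw [he]
      exact ENNReal.rpow_le_rpow h1.le (by positivity)
    rw [ENNReal.rpow_natCast, ← ENNReal.coe_pow] at hle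
    exact_mod_cast hle
  have ht2' : (t : ℝ) < 1 := by exact_mod_cast ht2
  have hgeo : Summable (fun m : ℕ => ((t : ℝ)) ^ m) :=
    summable_geometric_of_lt_one t.coe_nonneg ht2'
  have hsum0 : Summable (fun m : ℕ => ‖Q' ^ m‖) := by
    rw [← summable_nat_add_iff M₀]
    refine Summable.of_nonneg_of_le (fun m => norm_nonneg _)
      (fun m => ?_) ((summable_nat_add_iff M₀).mpr hgeo)
    have hb := hkey (m + M₀) (Nat.le_add_left _ _)
    calc ‖Q' ^ (m + M₀)‖ = ((‖Q' ^ (m + M₀)‖₊ : ℝ≥0) : ℝ) := rfl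
      _ ≤ ((t ^ (m + M₀) : ℝ≥0) : ℝ) := by exact_mod_cast hb
      _ = (t : ℝ) ^ (m + M₀) := by push_cast; ring
  have hQpow : ∀ m i j, 0 ≤ (Q ^ m) i j := by
    intro m
    induction m with
    | zero => intro i j; rw [pow_zero]; by_cases hij : i = j <;>
        simp [Matrix.one_apply, hij]
    | succ m ih =>
        intro i j
        rw [pow_succ, Matrix.mul_apply]
        exact Finset.sum_nonneg fun k _ => mul_nonneg (ih i k) (hQ k j)
  set u : ℕ → (Fin n) → ℝ := fun m => (Q ^ m) *ᵥ (fun _ => 1) with hudef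
  have hu0 : ∀ m i, 0 ≤ u m i := by
    intro m i
    simp only [hudef, Matrix.mulVec, dotProduct]
    exact Finset.sum_nonneg fun j _ => mul_nonneg (hQpow m i j) zero_le_one
  have hmap : ∀ m : ℕ, Q' ^ m = (Q ^ m).map Complex.ofReal := by
    intro m
    rw [hQ'def]
    rw [show Q.map Complex.ofReal = Complex.ofRealHom.mapMatrix Q from rfl, ← map_pow]
    rfl
  have hub : ∀ m i, u m i ≤ ‖Q' ^ m‖ := by
    intro m i
    have h1 : u m i = ∑ j, (Q ^ m) i j := by
      simp [hudef, Matrix.mulVec, dotProduct]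
    have h2 : (∑ j, ‖(Q' ^ m) i j‖₊ : ℝ≥0) ≤ ‖Q' ^ m‖₊ := by
      rw [Matrix.linfty_opNNNorm_def]
      exact Finset.le_sup (f := fun i => ∑ j, ‖(Q' ^ m) i j‖₊) (Finset.mem_univ i)
    have h3 : ∀ j, ‖(Q' ^ m) i j‖ = (Q ^ m) i j := by
      intro j
      rw [hmap m]
      simp [Matrix.map_apply, Complex.norm_real, Real.norm_eq_abs,
        abs_of_nonneg (hQpow m i j)]
    calc u m i = ∑ j, ‖(Q' ^ m) i j‖ := by
          rw [h1]
          exact Finset.sum_congr rfl fun j _ => (h3 j).symm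
      _ ≤ ‖Q' ^ m‖ := by simpa [coe_nnnorm, NNReal.coe_sum] using NNReal.coe_le_coe.mpr h2
  have hsumm : ∀ i, Summable (fun m => u m i) := fun i =>
    Summable.of_nonneg_of_le (fun m => hu0 m i) (fun m => hub m i) hsum0
  set x : Fin n → ℝ := fun i => ∑' m, u m i with hxdef
  have hu01 : ∀ i, u 0 i = 1 := by
    intro i
    simp [hudef, Matrix.mulVec, dotProduct, Matrix.one_apply]
  have hx : ∀ i, 0 < x i := by
    intro i
    have := Summable.le_tsum (hsumm i) 0 (fun j _ => hu0 j i)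
    rw [hu01 i] at this
    linarith
  have husucc : ∀ m i, (Q *ᵥ (u m)) i = u (m+1) i := by
    intro m i
    rw [hudef]
    simp only [Matrix.mulVec_mulVec]
    rw [← pow_succ']
  have hQx : ∀ i, (Q *ᵥ x) i = x i - 1 := by
    intro i
    have h1 : (Q *ᵥ x) i = ∑ j, Q i j * ∑' m, u m j := by
      simp [Matrix.mulVec, dotProduct, hxdef]
    have h2 : ∀ j, Q i j * ∑' m, u m j = ∑' m, Q i j * u m j := fun j =>
      (tsum_mul_left).symm
    have h3 : ∑ j, ∑' m, Q i j * u m j = ∑' m, ∑ j, Q i j * u m j :=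
      (Summable.tsum_finsetSum fun j _ => (hsumm j).mul_left _).symm
    have h4 : ∀ m, ∑ j, Q i j * u m j = u (m+1) i := by
      intro m
      rw [← husucc m i]
      simp [Matrix.mulVec, dotProduct]
    have h5 : ∑' m, u (m+1) i = x i - 1 := by
      have := Summable.tsum_eq_zero_add (hsumm i)
      rw [hu01 i] at this
      rw [hxdef]
      simp only at this ⊢
      linarith [this]
    rw [h1]
    rw [Finset.sum_congr rfl fun j _ => h2 j, h3]
    rw [tsum_congr h4] at *
    · exact h5
  refine ⟨x, hx, fun i => ?_⟩
  have hPQ : P = α • Q := (smul_inv_smul₀ hα.ne' P).symm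
  have hCi : (C *ᵥ x) i = α * x i - α * ((Q *ᵥ x) i) := by
    have hC : C = α • (1 : Matrix (Fin n) (Fin n) ℝ) - α • Q := by
      rw [← hPQ, hPdef, sub_sub_cancel]
    rw [hC, Matrix.sub_mulVec]
    simp [Matrix.smul_mulVec, Matrix.one_mulVec]
  rw [hCi, hQx i]
  have : α * x i - α * (x i - 1) = α := by ring
  rw [this]
  exact hα

lemma compMat_mulVec' (M : Matrix (Fin n) (Fin n) ℂ) (x : Fin n → ℝ) (i : Fin n) :
    (compMat M *ᵥ x) i
      = ‖(M i i)‖ * x i - ∑ j ∈ univ.erase i, ‖(M i j)‖ * x j := by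
  rw [show (compMat M *ᵥ x) i = ∑ j, compMat M i j * x j from by
    simp [Matrix.mulVec, dotProduct]]
  rw [← Finset.sum_erase_add _ _ (mem_univ i)]
  have h1 : compMat M i i = ‖(M i i)‖ := by simp [compMat]
  have h2 : ∀ j ∈ univ.erase i, compMat M i j * x j = -(‖(M i j)‖ * x j) := by
    intro j hj
    have hij : ¬ (i = j) := fun h => (Finset.mem_erase.mp hj).1 h.symm
    simp [compMat, hij]
  rw [Finset.sum_congr rfl h2, Finset.sum_neg_distrib, h1]
  ring

lemma keyBound' {M : Matrix (Fin n) (Fin n) ℂ} {x y : Fin n → ℝ}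
    (hx : ∀ i, 0 < x i) (hy : ∀ i, 0 ≤ y i)
    (hdom : ∀ i, y i < (compMat M *ᵥ x) i)
    {u w : Fin n → ℂ} (hu : M *ᵥ u = w) (hw : ∀ k, ‖(w k)‖ ≤ y k) :
    ∀ i, ‖(u i)‖ < x i := by
  by_cases hu0 : u = 0
  · intro i; simp [hu0]; exact hx i
  obtain ⟨k0, hk0⟩ := Function.ne_iff.mp hu0
  obtain ⟨k, -, hk⟩ := Finset.exists_max_image univ (fun j => ‖(u j)‖ / x j)
    ⟨k0, mem_univ k0⟩
  set c := ‖(u k)‖ / x k with hc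
  have hc0 : 0 < c :=
    lt_of_lt_of_le (div_pos (by simpa using hk0) (hx k0)) (hk k0 (mem_univ k0))
  have hcb : ∀ j, ‖(u j)‖ ≤ c * x j := fun j =>
    (div_le_iff₀ (hx j)).mp (hk j (mem_univ j))
  have huk : ‖(u k)‖ = c * x k := by
    rw [hc, div_mul_comm, div_self (hx k).ne', one_mul]
  have hrow : M k k * u k = w k - ∑ j ∈ univ.erase k, M k j * u j := by
    have h1 : ∑ j, M k j * u j = w k := by
      rw [← hu]; simp [Matrix.mulVec, dotProduct]
    have h2 := Finset.sum_erase_add univ (fun j => M k j * u j) (mem_univ k)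
    linear_combination h2 + h1
  have habs : ‖(M k k)‖ * (c * x k)
      ≤ y k + c * ∑ j ∈ univ.erase k, ‖(M k j)‖ * x j := by
    rw [← huk, ← norm_mul, hrow]
    refine le_trans (norm_sub_le _ _) ?_
    refine add_le_add (hw k) ?_
    refine le_trans (norm_sum_le _ _) ?_
    rw [Finset.mul_sum]
    refine Finset.sum_le_sum fun j hj => ?_
    rw [norm_mul]
    calc ‖(M k j)‖ * ‖(u j)‖
        ≤ ‖(M k j)‖ * (c * x j) :=
          mul_le_mul_of_nonneg_left (hcb j) (norm_nonneg _)
      _ = c * (‖(M k j)‖ * x j) := by ring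
  have hd : c * (compMat M *ᵥ x) k ≤ y k := by
    rw [compMat_mulVec']
    nlinarith [habs]
  have hck : c < 1 := by
    by_contra hc1
    push_neg at hc1
    have h1 : (compMat M *ᵥ x) k ≤ c * (compMat M *ᵥ x) k := by
      nlinarith [hdom k, hy k]
    linarith [hdom k, le_trans h1 hd]
  intro i
  calc ‖(u i)‖ ≤ c * x i := hcb i
    _ < 1 * x i := by exact (mul_lt_mul_iff_left₀ (hx i)).mpr hck
    _ = x i := one_mul _

end Aux

theorem stmt1 {n : ℕ} (A M N : Matrix (Fin n) (Fin n) ℂ)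
    (hsplit : A = M - N) (hH : IsMMat (compMat M - cabs N)) :
    IsUnit M ∧ specRad (cabs (1 - M⁻¹ * A)) < 1 := by
  obtain ⟨x, hx, hCx⟩ := exists_pos_vec' hH
  set y : Fin n → ℝ := (cabs N) *ᵥ x with hydef
  have hy : ∀ k, 0 ≤ y k := by
    intro k
    simp only [hydef, Matrix.mulVec, dotProduct, cabs]
    exact Finset.sum_nonneg fun j _ => mul_nonneg (norm_nonneg _) (hx j).le
  have hdom : ∀ i, y i < (compMat M *ᵥ x) i := by
    intro i
    have h := hCx i
    rw [Matrix.sub_mulVec] at h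
    have : ((compMat M *ᵥ x) - (cabs N *ᵥ x)) i = (compMat M *ᵥ x) i - y i := rfl
    rw [this] at h
    linarith
  have hdet : M.det ≠ 0 := by
    intro hd
    obtain ⟨v, hv0, hv⟩ := (Matrix.exists_mulVec_eq_zero_iff).mpr hd
    obtain ⟨k, hk⟩ := Function.ne_iff.mp hv0
    have hvk : v k ≠ 0 := by simpa using hk
    have hvka : 0 < ‖(v k)‖ := by simpa using hvk
    set u : Fin n → ℂ := ((x k / ‖(v k)‖ : ℝ) : ℂ) • v with hu'
    have hu : M *ᵥ u = 0 := by rw [hu', Matrix.mulVec_smul, hv, smul_zero]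
    have hlt := keyBound' hx hy hdom hu (fun j => by simp [hy j]) k
    have habs : ‖(u k)‖ = x k := by
      rw [hu']
      simp only [Pi.smul_apply, smul_eq_mul, norm_mul, Complex.norm_real, Real.norm_eq_abs]
      rw [abs_of_nonneg (div_nonneg (hx k).le hvka.le)]
      field_simp
    rw [habs] at hlt
    exact lt_irrefl _ hlt
  have hM : IsUnit M := (Matrix.isUnit_iff_isUnit_det M).mpr (isUnit_iff_ne_zero.mpr hdet)
  refine ⟨hM, ?_⟩
  have hkeyid : 1 - M⁻¹ * A = M⁻¹ * N := by
    rw [hsplit, Matrix.mul_sub, Matrix.nonsing_inv_mul M (isUnit_iff_ne_zero.mpr hdet), sub_sub_cancel]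
  rw [hkeyid]
  refine specRad_lt_one' (fun i j => norm_nonneg _) hx ?_
  intro i
  -- construct the phase vector
  set w : Fin n → ℂ := fun k =>
    ((y k : ℝ) : ℂ) * (if M⁻¹ i k = 0 then 1
      else (starRingEnd ℂ) (M⁻¹ i k) / ((‖(M⁻¹ i k)‖ : ℝ) : ℂ)) with hwdef
  have hwabs : ∀ k, ‖(w k)‖ = y k := by
    intro k
    rw [hwdef]
    simp only [norm_mul, Complex.norm_real, Real.norm_eq_abs, abs_of_nonneg (hy k)]
    by_cases h0 : M⁻¹ i k = 0
    · simp [h0]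
    · rw [if_neg h0, norm_div, Complex.norm_conj, Complex.norm_real, Real.norm_eq_abs,
        abs_of_nonneg (norm_nonneg _), div_self (norm_ne_zero_iff.mpr h0), mul_one]
  set u : Fin n → ℂ := M⁻¹ *ᵥ w with hu'
  have hu : M *ᵥ u = w := by
    rw [hu', Matrix.mulVec_mulVec, Matrix.mul_nonsing_inv M (isUnit_iff_ne_zero.mpr hdet), Matrix.one_mulVec]
  have hui := keyBound' hx hy hdom hu (fun k => (hwabs k).le) i
  have hval : ∀ k, M⁻¹ i k * w k = ((‖(M⁻¹ i k)‖ * y k : ℝ) : ℂ) := by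
    intro k
    by_cases h0 : M⁻¹ i k = 0
    · simp [hwdef, h0]
    · have hwk : w k = ((y k : ℝ) : ℂ) * ((starRingEnd ℂ) (M⁻¹ i k)
          / ((‖(M⁻¹ i k)‖ : ℝ) : ℂ)) := by
        rw [hwdef]
        simp only
        rw [if_neg h0]
      rw [hwk, show M⁻¹ i k * (((y k : ℝ) : ℂ) * ((starRingEnd ℂ) (M⁻¹ i k)
          / ((‖(M⁻¹ i k)‖ : ℝ) : ℂ)))
        = ((y k : ℝ) : ℂ) * ((M⁻¹ i k * (starRingEnd ℂ) (M⁻¹ i k))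
          / ((‖(M⁻¹ i k)‖ : ℝ) : ℂ)) from by ring]
      rw [Complex.mul_conj, Complex.normSq_eq_norm_sq]
      have habs0 : ((‖(M⁻¹ i k)‖ : ℝ) : ℂ) ≠ 0 := by
        exact_mod_cast norm_ne_zero_iff.mpr h0
      push_cast
      rw [sq, mul_div_assoc, div_self habs0, mul_one]
      ring
  have huival : u i = ((∑ k, ‖(M⁻¹ i k)‖ * y k : ℝ) : ℂ) := by
    rw [hu']
    rw [show (M⁻¹ *ᵥ w) i = ∑ k, M⁻¹ i k * w k from by
      simp [Matrix.mulVec, dotProduct]]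
    rw [Finset.sum_congr rfl fun k _ => hval k]
    push_cast
    rfl
  have habsui : ‖(u i)‖ = ∑ k, ‖(M⁻¹ i k)‖ * y k := by
    rw [huival, Complex.norm_real, Real.norm_eq_abs]
    exact abs_of_nonneg (Finset.sum_nonneg fun k _ =>
      mul_nonneg (norm_nonneg _) (hy k))
  have hfinal : (cabs (M⁻¹ * N) *ᵥ x) i ≤ ∑ k, ‖(M⁻¹ i k)‖ * y k := by
    have h1 : (cabs (M⁻¹ * N) *ᵥ x) i = ∑ j, ‖(∑ k, M⁻¹ i k * N k j)‖ * x j := by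
      simp [Matrix.mulVec, dotProduct, cabs, Matrix.mul_apply]
    rw [h1]
    have h2 : ∀ j, ‖(∑ k, M⁻¹ i k * N k j)‖ * x j
        ≤ ∑ k, ‖(M⁻¹ i k)‖ * ‖(N k j)‖ * x j := by
      intro j
      rw [← Finset.sum_mul]
      refine mul_le_mul_of_nonneg_right ?_ (hx j).le
      refine le_trans (norm_sum_le _ _) ?_
      exact Finset.sum_le_sum fun k _ => le_of_eq (norm_mul _ _)
    refine le_trans (Finset.sum_le_sum fun j _ => h2 j) (le_of_eq ?_)
    rw [Finset.sum_comm]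
    refine Finset.sum_congr rfl fun k _ => ?_
    rw [hydef]
    rw [show (cabs N *ᵥ x) k = ∑ j, ‖(N k j)‖ * x j from by
      simp [Matrix.mulVec, dotProduct, cabs]]
    rw [Finset.mul_sum]
    exact Finset.sum_congr rfl fun j _ => by ring
  calc (cabs (M⁻¹ * N) *ᵥ x) i ≤ ∑ k, ‖(M⁻¹ i k)‖ * y k := hfinal
    _ = ‖(u i)‖ := habsui.symm
    _ < x i := hui
end

section
/- For a square complex matrix 𝒜 of size n×n, ρ(|𝒜|) < 1 holds if and only if there exists a real vector w with all entries strictly positive such that ‖𝒜‖_∞^w < 1. -/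
open Matrix

/-- Weighted maximum norm `‖A‖_∞^w = max_i (1/w_i) Σ_j |A_{i,j}| w_j`. -/
noncomputable def wnorm {m : Type*} [Fintype m]
    (A : Matrix m m ℂ) (w : m → ℝ) : ℝ :=
  ⨆ i, (1 / w i) * ∑ j, ‖A i j‖ * w j

open scoped ENNReal NNReal

/-- If all eigenvalue moduli are `≤ r < γ`, then some power of `B` has all
absolute row sums `< γ ^ m`. -/
lemma auxGelfand {n : ℕ} (B : Matrix (Fin n) (Fin n) ℝ) (r γ : ℝ) (hγ0 : 0 < γ)
    (hr : ∀ μ ∈ spectrum ℂ (B.map Complex.ofReal), ‖μ‖ ≤ r) (hrγ : r < γ) :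
    ∃ m : ℕ, 0 < m ∧ ∀ i, ∑ j, |(B ^ m) i j| < γ ^ m := by
  classical
  letI : SeminormedRing (Matrix (Fin n) (Fin n) ℂ) := Matrix.linftyOpSemiNormedRing
  letI : NormedRing (Matrix (Fin n) (Fin n) ℂ) := Matrix.linftyOpNormedRing
  letI : NormedAlgebra ℂ (Matrix (Fin n) (Fin n) ℂ) := Matrix.linftyOpNormedAlgebra
  set M : Matrix (Fin n) (Fin n) ℂ := B.map Complex.ofReal with hM
  have hsp : spectralRadius ℂ M ≤ ENNReal.ofReal r := by
    rw [spectralRadius]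
    refine iSup₂_le fun μ hμ => ?_
    rw [← enorm_eq_nnnorm, ← ofReal_norm]
    exact ENNReal.ofReal_le_ofReal (le_trans (le_of_eq rfl) (hr μ hμ))
  have hlt : spectralRadius ℂ M < ENNReal.ofReal γ :=
    lt_of_le_of_lt hsp ((ENNReal.ofReal_lt_ofReal_iff hγ0).mpr hrγ)
  have hg := spectrum.pow_nnnorm_pow_one_div_tendsto_nhds_spectralRadius M
  have hev := (hg.eventually_lt_const hlt).and (Filter.eventually_ge_atTop 1)
  obtain ⟨m, hm, hm1⟩ := hev.exists
  refine ⟨m, hm1, ?_⟩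
  have hmne : (m : ℝ) ≠ 0 := Nat.cast_ne_zero.mpr (by omega)
  have hx : (‖M ^ m‖₊ : ℝ≥0∞) < ENNReal.ofReal (γ ^ m) := by
    have h1 : ((‖M ^ m‖₊ : ℝ≥0∞) ^ (1 / m : ℝ)) ^ (m : ℝ) < (ENNReal.ofReal γ) ^ (m : ℝ) :=
      ENNReal.rpow_lt_rpow hm (by positivity)
    rwa [← ENNReal.rpow_mul, one_div, inv_mul_cancel₀ hmne, ENNReal.rpow_one,
      ENNReal.ofReal_rpow_of_pos hγ0, Real.rpow_natCast] at h1
  have hnorm : ‖M ^ m‖ < γ ^ m := by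
    rw [← enorm_eq_nnnorm, ← ofReal_norm] at hx
    exact (ENNReal.ofReal_lt_ofReal_iff_of_nonneg (norm_nonneg _)).mp hx
  intro i
  refine lt_of_le_of_lt ?_ hnorm
  have hrow : (∑ j, ‖(M ^ m) i j‖₊) ≤ ‖M ^ m‖₊ := by
    rw [Matrix.linfty_opNNNorm_def]
    exact Finset.le_sup (f := fun i => ∑ j, ‖(M ^ m) i j‖₊) (Finset.mem_univ i)
  have hrow' : (∑ j, ‖(M ^ m) i j‖) ≤ ‖M ^ m‖ := by
    have := (NNReal.coe_le_coe).mpr hrow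
    simpa [NNReal.coe_sum] using this
  refine le_trans (le_of_eq ?_) hrow'
  have hMp : M ^ m = (B ^ m).map Complex.ofReal := by
    have := map_pow (Complex.ofRealHom.mapMatrix (m := Fin n)) B m
    exact this.symm
  rw [hMp]
  refine Finset.sum_congr rfl fun j _ => ?_
  simp [Matrix.map_apply, Complex.norm_real, Real.norm_eq_abs]

/-- Spectrum membership for complex matrices yields an eigenvector. -/
lemma existsEigen {n : ℕ} {M : Matrix (Fin n) (Fin n) ℂ} {μ : ℂ} (hμ : μ ∈ spectrum ℂ M) :
    ∃ v : Fin n → ℂ, v ≠ 0 ∧ M.mulVec v = μ • v := by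
  rw [← AlgEquiv.spectrum_eq (Matrix.toLinAlgEquiv' (n := Fin n) (R := ℂ)) M] at hμ
  have h : Module.End.HasEigenvalue (Matrix.toLinAlgEquiv' M : Module.End ℂ (Fin n → ℂ)) μ :=
    Module.End.hasEigenvalue_iff_mem_spectrum.mpr hμ
  obtain ⟨v, hv⟩ := h.exists_hasEigenvector
  refine ⟨v, hv.2, ?_⟩
  have h2 := hv.apply_eq_smul
  have h3 : Matrix.toLinAlgEquiv' M v = M.mulVec v := by
    rw [Matrix.toLinAlgEquiv'_apply]
  rw [← h3, h2]

lemma powEntryNonneg {n : ℕ} (B : Matrix (Fin n) (Fin n) ℝ) (hB : ∀ i j, 0 ≤ B i j) :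
    ∀ (k : ℕ) (i j : Fin n), 0 ≤ (B ^ k) i j := by
  intro k
  induction k with
  | zero =>
    intro i j
    rw [pow_zero]
    by_cases h : i = j <;> simp [Matrix.one_apply, h]
  | succ k ih =>
    intro i j
    rw [pow_succ, Matrix.mul_apply]
    exact Finset.sum_nonneg fun l _ => mul_nonneg (ih i l) (hB l j)

theorem stmt2 {n : ℕ} (A : Matrix (Fin n) (Fin n) ℂ) :
    specRad (cabs A) < 1 ↔
      ∃ w : Fin n → ℝ, (∀ i, 0 < w i) ∧ wnorm A w < 1 := by
  classical
  rcases Nat.eq_zero_or_pos n with hn | hn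
  · subst hn
    haveI : Subsingleton (Matrix (Fin 0) (Fin 0) ℂ) :=
      ⟨fun a b => by ext i j; exact i.elim0⟩
    have hw : wnorm A (fun _ => 1) = 0 := by
      rw [wnorm]
      exact Real.iSup_of_isEmpty _
    have hsp : spectrum ℂ ((cabs A).map Complex.ofReal) = ∅ := by
      ext μ
      simp only [Set.mem_empty_iff_false, iff_false]
      intro hμ
      rw [spectrum.mem_iff] at hμ
      exact hμ (isUnit_of_subsingleton _)
    constructor
    · intro _
      exact ⟨fun _ => 1, fun i => i.elim0, by rw [hw]; norm_num⟩
    · intro _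
      rw [specRad, hsp, Set.image_empty, Real.sSup_empty]
      norm_num
  haveI : Nonempty (Fin n) := ⟨⟨0, hn⟩⟩
  set B := cabs A with hB
  have hBnn : ∀ i j, 0 ≤ B i j := fun i j => norm_nonneg _
  constructor
  · intro hρ
    set r := specRad B with hr
    have hmax0 : (0:ℝ) ≤ max r 0 := le_max_right r 0
    have hmax1 : max r 0 < 1 := max_lt hρ one_pos
    set γ := (max r 0 + 1) / 2 with hγ
    have hγ0 : 0 < γ := by rw [hγ]; linarith
    have hγ1 : γ < 1 := by rw [hγ]; linarith
    have hrγ : r < γ := by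
      have : r ≤ max r 0 := le_max_left _ _
      rw [hγ]; linarith
    have hrspec : ∀ μ ∈ spectrum ℂ (B.map Complex.ofReal), ‖μ‖ ≤ r := by
      intro μ hμ
      refine le_csSup ?_ ⟨μ, hμ, rfl⟩
      exact ((Matrix.finite_spectrum _).image _).bddAbove
    obtain ⟨m, hm0, hmrow⟩ := auxGelfand B r γ hγ0 hrspec hrγ
    have hrow : ∀ i, ∑ j, (B ^ m) i j < γ ^ m := by
      intro i
      refine lt_of_le_of_lt (le_of_eq ?_) (hmrow i)
      exact Finset.sum_congr rfl fun j _ => (abs_of_nonneg (powEntryNonneg B hBnn m i j)).symm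
    set s : ℕ → Fin n → ℝ := fun k i => ∑ j, (B ^ k) i j with hs
    set w : Fin n → ℝ := fun i => ∑ k ∈ Finset.range m, (γ⁻¹) ^ k * s k i with hwdef
    have hs0 : ∀ i, s 0 i = 1 := by
      intro i
      simp [hs, Matrix.one_apply]
    have hsnn : ∀ k i, 0 ≤ s k i :=
      fun k i => Finset.sum_nonneg fun j _ => powEntryNonneg B hBnn k i j
    have hcnn : ∀ k : ℕ, (0:ℝ) ≤ γ⁻¹ ^ k := fun k => pow_nonneg (inv_nonneg.mpr hγ0.le) k
    have hw1 : ∀ i, 1 ≤ w i := by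
      intro i
      have h0 : γ⁻¹ ^ 0 * s 0 i = 1 := by rw [pow_zero, one_mul, hs0]
      have hle : γ⁻¹ ^ 0 * s 0 i ≤ ∑ k ∈ Finset.range m, γ⁻¹ ^ k * s k i :=
        Finset.single_le_sum (f := fun k => γ⁻¹ ^ k * s k i)
          (fun k _ => mul_nonneg (hcnn k) (hsnn k i)) (Finset.mem_range.mpr hm0)
      rw [h0] at hle
      exact hle
    have hwpos : ∀ i, 0 < w i := fun i => lt_of_lt_of_le one_pos (hw1 i)
    have hkey : ∀ i, ∑ j, B i j * w j ≤ γ * w i := by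
      intro i
      have hswap : ∑ j, B i j * w j = ∑ k ∈ Finset.range m, γ⁻¹ ^ k * s (k + 1) i := by
        calc ∑ j, B i j * w j
            = ∑ j, ∑ k ∈ Finset.range m, B i j * (γ⁻¹ ^ k * s k j) := by
              simp only [hwdef, Finset.mul_sum]
          _ = ∑ k ∈ Finset.range m, ∑ j, B i j * (γ⁻¹ ^ k * s k j) := Finset.sum_comm
          _ = ∑ k ∈ Finset.range m, γ⁻¹ ^ k * ∑ j, B i j * s k j := by
              refine Finset.sum_congr rfl fun k _ => ?_
              rw [Finset.mul_sum]
              exact Finset.sum_congr rfl fun j _ => by ring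
          _ = ∑ k ∈ Finset.range m, γ⁻¹ ^ k * s (k + 1) i := by
              refine Finset.sum_congr rfl fun k _ => ?_
              congr 1
              calc ∑ j, B i j * ∑ l, (B ^ k) j l
                  = ∑ j, ∑ l, B i j * (B ^ k) j l := by
                    exact Finset.sum_congr rfl fun j _ => Finset.mul_sum _ _ _
                _ = ∑ l, ∑ j, B i j * (B ^ k) j l := Finset.sum_comm
                _ = ∑ l, (B ^ (k + 1)) i l := by
                    refine Finset.sum_congr rfl fun l _ => ?_
                    rw [pow_succ', Matrix.mul_apply]
      set f : ℕ → ℝ := fun k => γ⁻¹ ^ k * s k i with hf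
      have hγne : γ ≠ 0 := ne_of_gt hγ0
      have hterm : ∀ k : ℕ, γ⁻¹ ^ k * s (k + 1) i = γ * f (k + 1) := by
        intro k
        rw [hf]
        simp only [pow_succ]
        field_simp
      have hwi : w i = ∑ k ∈ Finset.range m, f k := rfl
      have hsum : ∑ k ∈ Finset.range m, γ⁻¹ ^ k * s (k + 1) i = γ * (w i + f m - 1) := by
        rw [Finset.sum_congr rfl fun k _ => hterm k, ← Finset.mul_sum]
        congr 1
        have h1 : ∑ k ∈ Finset.range (m + 1), f k = (∑ k ∈ Finset.range m, f (k + 1)) + f 0 :=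
          Finset.sum_range_succ' f m
        have h2 : ∑ k ∈ Finset.range (m + 1), f k = (∑ k ∈ Finset.range m, f k) + f m :=
          Finset.sum_range_succ f m
        have hf0 : f 0 = 1 := by simp [hf, hs0]
        rw [hwi]
        linarith
      have hfm : f m ≤ 1 := by
        rw [hf]
        have h1 : s m i ≤ γ ^ m := (hrow i).le
        have h2 : γ⁻¹ ^ m * s m i ≤ γ⁻¹ ^ m * γ ^ m :=
          mul_le_mul_of_nonneg_left h1 (hcnn m)
        rwa [← mul_pow, inv_mul_cancel₀ hγne, one_pow] at h2
      rw [hswap, hsum]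
      have : w i + f m - 1 ≤ w i := by linarith
      exact mul_le_mul_of_nonneg_left this hγ0.le
    refine ⟨w, hwpos, ?_⟩
    rw [wnorm]
    refine lt_of_le_of_lt (ciSup_le fun i => ?_) hγ1
    have h1 : (1 / w i) * (∑ j, ‖A i j‖ * w j) ≤ (1 / w i) * (γ * w i) := by
      refine mul_le_mul_of_nonneg_left ?_ (one_div_nonneg.mpr (hwpos i).le)
      exact hkey i
    refine le_trans h1 (le_of_eq ?_)
    have hne : w i ≠ 0 := ne_of_gt (hwpos i)
    field_simp
  · rintro ⟨w, hwpos, hwn⟩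
    have hbdd : BddAbove (Set.range fun i => (1 / w i) * ∑ j, ‖A i j‖ * w j) :=
      Set.Finite.bddAbove (Set.finite_range _)
    have hwn0 : 0 ≤ wnorm A w := by
      refine le_trans ?_ (le_ciSup hbdd (Classical.arbitrary (Fin n)))
      exact mul_nonneg (one_div_nonneg.mpr (hwpos _).le)
        (Finset.sum_nonneg fun j _ => mul_nonneg (norm_nonneg _) (hwpos j).le)
    rw [specRad]
    refine lt_of_le_of_lt (Real.sSup_le ?_ hwn0) hwn
    rintro x ⟨μ, hμ, rfl⟩
    obtain ⟨v, hv0, hveq⟩ := existsEigen hμ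
    obtain ⟨i, -, hi⟩ := Finset.exists_max_image Finset.univ
      (fun j => ‖v j‖ / w j) ⟨Classical.arbitrary _, Finset.mem_univ _⟩
    have hvi : 0 < ‖v i‖ := by
      rcases Function.ne_iff.mp hv0 with ⟨j0, hj0⟩
      have h1 : 0 < ‖v j0‖ / w j0 :=
        div_pos (norm_pos_iff.mpr hj0) (hwpos j0)
      have h2 := hi j0 (Finset.mem_univ j0)
      have h3 : 0 < ‖v i‖ / w i := lt_of_lt_of_le h1 h2
      have h4 := mul_pos h3 (hwpos i)
      rwa [div_mul_cancel₀ _ (ne_of_gt (hwpos i))] at h4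
    set t := ‖v i‖ / w i with ht
    have htpos : 0 ≤ t := (div_pos hvi (hwpos i)).le
    have hbound : ∀ j, ‖v j‖ ≤ t * w j := by
      intro j
      exact (div_le_iff₀ (hwpos j)).mp (hi j (Finset.mem_univ j))
    have hmv2 : ∑ j, ((B i j : ℂ) * v j) = μ * v i := by
      have h5 : (B.map Complex.ofReal).mulVec v i = μ * v i := by
        rw [hveq]; rfl
      rw [← h5]
      simp [Matrix.mulVec, dotProduct, Matrix.map_apply]
    have hchain : ‖μ‖ * ‖v i‖ ≤ t * ∑ j, B i j * w j := by
      calc ‖μ‖ * ‖v i‖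
          = ‖μ * v i‖ := (norm_mul μ (v i)).symm
        _ = ‖∑ j, ((B i j : ℂ) * v j)‖ := by rw [hmv2]
        _ ≤ ∑ j, ‖(B i j : ℂ) * v j‖ := norm_sum_le _ _
        _ = ∑ j, B i j * ‖v j‖ := by
            refine Finset.sum_congr rfl fun j _ => ?_
            rw [norm_mul, Complex.norm_real, Real.norm_eq_abs, abs_of_nonneg (hBnn i j)]
        _ ≤ ∑ j, B i j * (t * w j) :=
            Finset.sum_le_sum fun j _ => mul_le_mul_of_nonneg_left (hbound j) (hBnn i j)
        _ = t * ∑ j, B i j * w j := by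
            rw [Finset.mul_sum]
            exact Finset.sum_congr rfl fun j _ => by ring
    have hrowle : ∑ j, B i j * w j ≤ w i * wnorm A w := by
      have h4 : (1 / w i) * ∑ j, ‖A i j‖ * w j ≤ wnorm A w := le_ciSup hbdd i
      have h5 := mul_le_mul_of_nonneg_left h4 (hwpos i).le
      rwa [← mul_assoc, mul_one_div, div_self (ne_of_gt (hwpos i)), one_mul] at h5
    have hfinal : ‖μ‖ * ‖v i‖ ≤ ‖v i‖ * wnorm A w := by
      refine le_trans hchain (le_trans (mul_le_mul_of_nonneg_left hrowle htpos) (le_of_eq ?_))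
      rw [ht, ← mul_assoc, div_mul_cancel₀ _ (ne_of_gt (hwpos i))]
    rw [mul_comm] at hfinal
    exact (mul_le_mul_iff_of_pos_left hvi).mp hfinal
end

section
/- Let A be a complex n×n H-matrix, and let M and F be complex n×n matrices satisfying ⟨M⟩ - |M - A| = ⟨A⟩ and ⟨F⟩ - |F - A| = ⟨A⟩. Then M and F are invertible and ρ(|I - F⁻¹(M + F - A)M⁻¹A|) < 1. -/
open Matrix

/-- H-matrix: a complex square matrix whose comparison matrix is an M-matrix. -/
def IsHMat {m : Type*} [Fintype m] [DecidableEq m]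
    (A : Matrix m m ℂ) : Prop :=
  IsMMat (compMat A)

section Aux

open Filter

attribute [local instance] Matrix.linftyOpNormedRing Matrix.linftyOpNormedAlgebra

variable {n : ℕ}

lemma aux_specRad_nonneg (P : Matrix (Fin n) (Fin n) ℝ) : 0 ≤ specRad P := by
  apply Real.sSup_nonneg
  rintro y ⟨z, _, rfl⟩
  exact norm_nonneg _

lemma aux_specRad_le {P : Matrix (Fin n) (Fin n) ℝ} {t : ℝ} (ht : 0 ≤ t)
    (h : ∀ z ∈ spectrum ℂ (P.map Complex.ofReal), ‖z‖ ≤ t) : specRad P ≤ t := by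
  apply Real.sSup_le _ ht
  rintro y ⟨z, hz, rfl⟩
  exact h z hz

lemma aux_abs_le_specRad [Nonempty (Fin n)] {P : Matrix (Fin n) (Fin n) ℝ} {z : ℂ}
    (hz : z ∈ spectrum ℂ (P.map Complex.ofReal)) : ‖z‖ ≤ specRad P := by
  apply le_csSup
  · refine ⟨‖P.map Complex.ofReal‖, ?_⟩
    rintro y ⟨w, hw, rfl⟩
    show ‖w‖ ≤ _
    exact spectrum.norm_le_norm_of_mem hw
  · exact ⟨z, hz, rfl⟩

lemma aux_mulVec_nonneg {P : Matrix (Fin n) (Fin n) ℝ} {u : Fin n → ℝ}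
    (hP : ∀ i j, 0 ≤ P i j) (hu : ∀ i, 0 ≤ u i) : ∀ i, 0 ≤ P.mulVec u i := by
  intro i
  simp only [Matrix.mulVec, dotProduct]
  exact Finset.sum_nonneg fun j _ => mul_nonneg (hP i j) (hu j)

lemma aux_mulVec_mono_vec {P : Matrix (Fin n) (Fin n) ℝ} {u v : Fin n → ℝ}
    (hP : ∀ i j, 0 ≤ P i j) (huv : ∀ i, u i ≤ v i) : ∀ i, P.mulVec u i ≤ P.mulVec v i := by
  intro i
  simp only [Matrix.mulVec, dotProduct]
  exact Finset.sum_le_sum fun j _ => mul_le_mul_of_nonneg_left (huv j) (hP i j)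

lemma aux_mulVec_mono_mat {P Q : Matrix (Fin n) (Fin n) ℝ} {u : Fin n → ℝ}
    (hPQ : ∀ i j, P i j ≤ Q i j) (hu : ∀ i, 0 ≤ u i) : ∀ i, P.mulVec u i ≤ Q.mulVec u i := by
  intro i
  simp only [Matrix.mulVec, dotProduct]
  exact Finset.sum_le_sum fun j _ => mul_le_mul_of_nonneg_right (hPQ i j) (hu j)

lemma aux_cabs_nonneg (P : Matrix (Fin n) (Fin n) ℂ) : ∀ i j, 0 ≤ cabs P i j := by
  intro i j; exact norm_nonneg _

lemma aux_cabs_mul_mulVec (P Q : Matrix (Fin n) (Fin n) ℂ) {y : Fin n → ℝ} (hy : ∀ i, 0 ≤ y i) :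
    ∀ i, (cabs (P * Q)).mulVec y i ≤ (cabs P).mulVec ((cabs Q).mulVec y) i := by
  intro i
  simp only [Matrix.mulVec, dotProduct]
  calc ∑ j, cabs (P * Q) i j * y j
      ≤ ∑ j, (∑ k, cabs P i k * cabs Q k j) * y j := by
        refine Finset.sum_le_sum fun j _ => mul_le_mul_of_nonneg_right ?_ (hy j)
        show ‖(P * Q) i j‖ ≤ _
        rw [Matrix.mul_apply]
        refine le_trans (norm_sum_le _ _) (le_of_eq (Finset.sum_congr rfl fun k _ => ?_))
        exact norm_mul _ _
    _ = ∑ j, ∑ k, cabs P i k * (cabs Q k j * y j) := by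
        simp_rw [Finset.sum_mul, mul_assoc]
    _ = ∑ k, ∑ j, cabs P i k * (cabs Q k j * y j) := Finset.sum_comm
    _ = ∑ k, cabs P i k * ∑ j, cabs Q k j * y j := by
        simp_rw [Finset.mul_sum]

lemma aux_rowpos {S T : Matrix (Fin n) (Fin n) ℝ} (hS : ∀ i j, 0 ≤ S i j) (hST : S * T = 1) :
    ∀ i, 0 < S.mulVec (fun _ => (1 : ℝ)) i := by
  intro i
  have h0 : 0 ≤ S.mulVec (fun _ => (1 : ℝ)) i :=
    aux_mulVec_nonneg hS (fun _ => zero_le_one) i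
  rcases h0.lt_or_eq with h | h
  · exact h
  · exfalso
    have hsum : ∑ j, S i j * 1 = 0 := by
      simpa [Matrix.mulVec, dotProduct] using h.symm
    have hzero : ∀ j ∈ Finset.univ, S i j * 1 = 0 :=
      (Finset.sum_eq_zero_iff_of_nonneg fun j _ => mul_nonneg (hS i j) zero_le_one).mp hsum
    have h1 : (S * T) i i = 0 := by
      rw [Matrix.mul_apply]
      refine Finset.sum_eq_zero fun j _ => ?_
      have := hzero j (Finset.mem_univ j)
      rw [mul_one] at this
      rw [this, zero_mul]
    rw [hST, Matrix.one_apply_eq] at h1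
    exact one_ne_zero h1

lemma aux_entry_norm_le {α : Type*} [NormedRing α] (X : Matrix (Fin n) (Fin n) α) (i j : Fin n) :
    ‖X i j‖ ≤ ‖X‖ := by
  have h1 : ‖X i j‖₊ ≤ ‖X‖₊ := by
    rw [Matrix.linfty_opNNNorm_def]
    calc ‖X i j‖₊ ≤ ∑ k, ‖X i k‖₊ :=
          Finset.single_le_sum (f := fun k => ‖X i k‖₊) (fun k _ => zero_le) (Finset.mem_univ j)
      _ ≤ _ := Finset.le_sup (f := fun i => ∑ j, ‖X i j‖₊) (Finset.mem_univ i)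
  exact_mod_cast h1

lemma aux_entry_continuous {α : Type*} [NormedRing α] (i j : Fin n) :
    Continuous (fun X : Matrix (Fin n) (Fin n) α => X i j) := by
  have := AddMonoidHomClass.continuous_of_bound (Matrix.entryAddMonoidHom α i j) 1
    (fun X => by simpa using aux_entry_norm_le X i j)
  exact this

lemma aux_entry_hasSum {α : Type*} [NormedRing α] {f : ℕ → Matrix (Fin n) (Fin n) α}
    {S : Matrix (Fin n) (Fin n) α} (hf : HasSum f S) (i j : Fin n) :
    HasSum (fun k => f k i j) (S i j) := by
  have := hf.map (Matrix.entryAddMonoidHom α i j) (aux_entry_continuous i j)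
  exact this

/-- Eigenvalue bound: a nonnegative matrix that strictly contracts a positive
vector has spectral radius less than one. -/
lemma aux_specRad_lt_one [Nonempty (Fin n)] {P : Matrix (Fin n) (Fin n) ℝ} {x : Fin n → ℝ}
    (hP : ∀ i j, 0 ≤ P i j) (hx : ∀ i, 0 < x i) (hPx : ∀ i, P.mulVec x i < x i) :
    specRad P < 1 := by
  classical
  set θ : ℝ := Finset.univ.sup' Finset.univ_nonempty (fun i => P.mulVec x i / x i) with hθdef
  have hθlt : θ < 1 := by
    rw [hθdef, Finset.sup'_lt_iff]
    exact fun i _ => (div_lt_one (hx i)).mpr (hPx i)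
  have hθi : ∀ i, P.mulVec x i ≤ θ * x i := by
    intro i
    have h' : P.mulVec x i / x i ≤ θ := by
      rw [hθdef]
      exact Finset.le_sup' (f := fun i => P.mulVec x i / x i) (Finset.mem_univ i)
    exact (div_le_iff₀ (hx i)).mp h'
  have hθ0 : 0 ≤ θ := by
    obtain ⟨i⟩ := (inferInstance : Nonempty (Fin n))
    refine le_trans (div_nonneg (aux_mulVec_nonneg hP (fun k => (hx k).le) i) (hx i).le) ?_
    rw [hθdef]
    exact Finset.le_sup' (f := fun i => P.mulVec x i / x i) (Finset.mem_univ i)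
  refine lt_of_le_of_lt (aux_specRad_le hθ0 ?_) hθlt
  intro z hz
  set Pc := P.map Complex.ofReal with hPc
  have hne : ¬ IsUnit (algebraMap ℂ (Matrix (Fin n) (Fin n) ℂ) z - Pc) := spectrum.mem_iff.mp hz
  have hdet : (algebraMap ℂ (Matrix (Fin n) (Fin n) ℂ) z - Pc).det = 0 := by
    by_contra hd
    exact hne ((Matrix.isUnit_iff_isUnit_det _).mpr (isUnit_iff_ne_zero.mpr hd))
  obtain ⟨v, hv0, hv⟩ := Matrix.exists_mulVec_eq_zero_iff.mpr hdet
  have hev : ∀ i, Pc.mulVec v i = z * v i := by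
    have h1 : (algebraMap ℂ (Matrix (Fin n) (Fin n) ℂ) z - Pc).mulVec v
        = z • v - Pc.mulVec v := by
      rw [Matrix.sub_mulVec, Algebra.algebraMap_eq_smul_one, Matrix.smul_mulVec,
        Matrix.one_mulVec]
    rw [h1, sub_eq_zero] at hv
    intro i
    exact (congrFun hv i).symm
  obtain ⟨i0, -, hmax⟩ := Finset.univ.exists_max_image
    (fun i => ‖v i‖ / x i) Finset.univ_nonempty
  set c : ℝ := ‖v i0‖ / x i0 with hc
  have hcx : ∀ j, ‖v j‖ ≤ c * x j := by
    intro j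
    exact (div_le_iff₀ (hx j)).mp (hmax j (Finset.mem_univ j))
  have hc0 : 0 < c := by
    obtain ⟨j, hj⟩ := Function.ne_iff.mp hv0
    exact lt_of_lt_of_le (div_pos (norm_pos_iff.mpr hj) (hx j)) (hmax j (Finset.mem_univ j))
  have hvi0 : ‖v i0‖ = c * x i0 := (div_mul_cancel₀ _ (hx i0).ne').symm
  have hchain : ‖z‖ * (c * x i0) ≤ θ * (c * x i0) := by
    calc ‖z‖ * (c * x i0) = ‖z * v i0‖ := by rw [norm_mul, hvi0]
      _ = ‖Pc.mulVec v i0‖ := by rw [hev i0]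
      _ ≤ ∑ j, P i0 j * ‖v j‖ := by
          show ‖∑ j, Pc i0 j * v j‖ ≤ _
          refine le_trans (norm_sum_le _ _) (le_of_eq ?_)
          refine Finset.sum_congr rfl fun j _ => ?_
          rw [norm_mul]
          congr 1
          simp [hPc, Matrix.map_apply, Complex.norm_real, abs_of_nonneg (hP i0 j)]
      _ ≤ ∑ j, P i0 j * (c * x j) :=
          Finset.sum_le_sum fun j _ => mul_le_mul_of_nonneg_left (hcx j) (hP i0 j)
      _ = c * P.mulVec x i0 := by
          simp only [Matrix.mulVec, dotProduct, Finset.mul_sum]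
          exact Finset.sum_congr rfl fun j _ => by ring
      _ ≤ c * (θ * x i0) := mul_le_mul_of_nonneg_left (hθi i0) hc0.le
      _ = θ * (c * x i0) := by ring
  have hpos : 0 < c * x i0 := mul_pos hc0 (hx i0)
  exact le_of_mul_le_mul_right hchain hpos

/-- Neumann series workhorse. -/
lemma aux_geo (C : Matrix (Fin n) (Fin n) ℂ) (D : Matrix (Fin n) (Fin n) ℝ)
    (hD0 : ∀ i j, 0 ≤ D i j) (hdom : ∀ i j, ‖C i j‖ ≤ D i j)
    (hρ : specRad D < 1) :
    ∃ S : Matrix (Fin n) (Fin n) ℂ, ∃ SD : Matrix (Fin n) (Fin n) ℝ,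
      (1 - C) * S = 1 ∧ S * (1 - C) = 1 ∧
      (1 - D) * SD = 1 ∧ SD * (1 - D) = 1 ∧ (∀ i j, 0 ≤ SD i j) ∧
      (∀ i j, ‖S i j‖ ≤ SD i j) := by
  classical
  rcases isEmpty_or_nonempty (Fin n) with hE | hNE
  · haveI : Subsingleton (Matrix (Fin n) (Fin n) ℂ) := ⟨fun a b => by ext i j; exact hE.elim i⟩
    haveI : Subsingleton (Matrix (Fin n) (Fin n) ℝ) := ⟨fun a b => by ext i j; exact hE.elim i⟩
    exact ⟨1, 1, Subsingleton.elim _ _, Subsingleton.elim _ _, Subsingleton.elim _ _,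
      Subsingleton.elim _ _, fun i => hE.elim i, fun i => hE.elim i⟩
  have hpow : ∀ k : ℕ, (∀ i j, 0 ≤ (D ^ k) i j) ∧
      (∀ i j, ‖(C ^ k) i j‖ ≤ (D ^ k) i j) := by
    intro k
    induction k with
    | zero =>
      constructor <;> intro i j <;> simp only [pow_zero, Matrix.one_apply] <;> split <;>
        simp_all [Matrix.one_apply]
    | succ k ih =>
      constructor
      · intro i j
        rw [pow_succ, Matrix.mul_apply]
        exact Finset.sum_nonneg fun l _ => mul_nonneg (ih.1 i l) (hD0 l j)
      · intro i j
        rw [pow_succ, pow_succ, Matrix.mul_apply, Matrix.mul_apply]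
        refine le_trans (norm_sum_le _ _) (Finset.sum_le_sum fun l _ => ?_)
        rw [norm_mul]
        exact mul_le_mul (ih.2 i l) (hdom l j) (norm_nonneg _) (ih.1 i l)
  set Dc := D.map Complex.ofReal with hDc
  have hmappow : ∀ k : ℕ, Dc ^ k = (D ^ k).map Complex.ofReal := by
    intro k
    induction k with
    | zero =>
      simp only [pow_zero]
      exact (Matrix.map_one _ Complex.ofReal_zero Complex.ofReal_one).symm
    | succ k ih =>
      ext i j
      rw [pow_succ, pow_succ, ih, Matrix.mul_apply, Matrix.map_apply, Matrix.mul_apply]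
      push_cast
      refine Finset.sum_congr rfl fun l _ => ?_
      simp [hDc, Matrix.map_apply]
  have hnormD : ∀ k : ℕ, ‖D ^ k‖₊ = ‖Dc ^ k‖₊ := by
    intro k
    rw [hmappow k, Matrix.linfty_opNNNorm_def, Matrix.linfty_opNNNorm_def]
    congr 1
    funext i
    refine Finset.sum_congr rfl fun j _ => ?_
    rw [Matrix.map_apply, Complex.nnnorm_real]
  have hnormC : ∀ k : ℕ, ‖C ^ k‖₊ ≤ ‖Dc ^ k‖₊ := by
    intro k
    rw [hmappow k, Matrix.linfty_opNNNorm_def, Matrix.linfty_opNNNorm_def]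
    refine Finset.sup_mono_fun fun i _ => Finset.sum_le_sum fun j _ => ?_
    rw [Matrix.map_apply, Complex.nnnorm_real]
    rw [← NNReal.coe_le_coe]
    push_cast
    rw [Real.norm_eq_abs]
    exact le_trans ((hpow k).2 i j) (le_abs_self _)
  have h0ρ : 0 ≤ specRad D := aux_specRad_nonneg D
  set s : ℝ := (specRad D + 1) / 2 with hs
  have hs0 : 0 ≤ s := by rw [hs]; linarith
  have hs1 : s < 1 := by rw [hs]; linarith
  have hρs : specRad D < s := by rw [hs]; linarith
  have hsr : spectralRadius ℂ Dc < ENNReal.ofReal s := by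
    have hle : spectralRadius ℂ Dc ≤ ENNReal.ofReal (specRad D) := by
      refine iSup₂_le fun z hz => ?_
      rw [show ((‖z‖₊ : NNReal) : ENNReal) = ENNReal.ofReal ‖z‖ from (ofReal_norm z).symm]
      refine ENNReal.ofReal_le_ofReal ?_
      exact aux_abs_le_specRad hz
    exact lt_of_le_of_lt hle ((ENNReal.ofReal_lt_ofReal_iff (by linarith)).mpr hρs)
  have hgel := spectrum.pow_nnnorm_pow_one_div_tendsto_nhds_spectralRadius Dc
  have hev : ∀ᶠ k : ℕ in atTop, (‖Dc ^ k‖₊ : ENNReal) ^ (1 / (k : ℝ)) < ENNReal.ofReal s :=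
    hgel.eventually_lt_const hsr
  have hev2 : ∀ᶠ k in atTop, ‖Dc ^ k‖ ≤ s ^ k := by
    filter_upwards [hev, eventually_ge_atTop 1] with k hk hk1
    have hkR : ((k : ℝ)) ≠ 0 := Nat.cast_ne_zero.mpr (by omega)
    have hkpos : (0 : ℝ) < (k : ℝ) := by positivity
    have h1 : ((‖Dc ^ k‖₊ : ENNReal) ^ (1 / (k : ℝ))) ^ ((k : ℕ) : ℝ)
        < (ENNReal.ofReal s) ^ ((k : ℕ) : ℝ) := ENNReal.rpow_lt_rpow hk hkpos
    rw [← ENNReal.rpow_mul, one_div_mul_cancel hkR, ENNReal.rpow_one] at h1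
    rw [ENNReal.rpow_natCast, ← ENNReal.ofReal_pow hs0,
      show ((‖Dc ^ k‖₊ : NNReal) : ENNReal) = ENNReal.ofReal ‖Dc ^ k‖ from (ofReal_norm _).symm] at h1
    exact le_of_lt ((ENNReal.ofReal_lt_ofReal_iff_of_nonneg (norm_nonneg _)).mp h1)
  have hgeom : Summable (fun k : ℕ => s ^ k) := summable_geometric_of_lt_one hs0 hs1
  have hsumC : Summable (fun k => C ^ k) := by
    refine Summable.of_norm_bounded_eventually_nat hgeom ?_
    filter_upwards [hev2] with k hk
    refine le_trans ?_ hk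
    simpa using NNReal.coe_le_coe.mpr (hnormC k)
  have hsumD : Summable (fun k => D ^ k) := by
    refine Summable.of_norm_bounded_eventually_nat hgeom ?_
    filter_upwards [hev2] with k hk
    refine le_trans (le_of_eq ?_) hk
    simpa using congrArg (fun t : NNReal => (t : ℝ)) (hnormD k)
  set S := ∑' k : ℕ, C ^ k with hS
  set SD := ∑' k : ℕ, D ^ k with hSD
  have htailC : ∑' k : ℕ, C ^ (k + 1) = S - 1 := by
    have h2 := Summable.tsum_eq_zero_add hsumC
    rw [pow_zero] at h2
    rw [← hS] at h2
    rw [h2]; abel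
  have htailD : ∑' k : ℕ, D ^ (k + 1) = SD - 1 := by
    have h2 := Summable.tsum_eq_zero_add hsumD
    rw [pow_zero] at h2
    rw [← hSD] at h2
    rw [h2]; abel
  have hmulC : C * S = S - 1 := by
    rw [← hsumC.tsum_mul_left C, ← htailC]
    exact tsum_congr fun k => (pow_succ' C k).symm
  have hmulC' : S * C = S - 1 := by
    rw [← hsumC.tsum_mul_right C, ← htailC]
    exact tsum_congr fun k => (pow_succ C k).symm
  have hmulD : D * SD = SD - 1 := by
    rw [← hsumD.tsum_mul_left D, ← htailD]
    exact tsum_congr fun k => (pow_succ' D k).symm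
  have hmulD' : SD * D = SD - 1 := by
    rw [← hsumD.tsum_mul_right D, ← htailD]
    exact tsum_congr fun k => (pow_succ D k).symm
  have hSij : ∀ i j, HasSum (fun k => (C ^ k) i j) (S i j) :=
    fun i j => aux_entry_hasSum hsumC.hasSum i j
  have hSDij : ∀ i j, HasSum (fun k => (D ^ k) i j) (SD i j) :=
    fun i j => aux_entry_hasSum hsumD.hasSum i j
  refine ⟨S, SD, ?_, ?_, ?_, ?_, ?_, ?_⟩
  · rw [sub_mul, one_mul, hmulC]; abel
  · rw [mul_sub, mul_one, hmulC']; abel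
  · rw [sub_mul, one_mul, hmulD]; abel
  · rw [mul_sub, mul_one, hmulD']; abel
  · intro i j
    rw [← (hSDij i j).tsum_eq]
    exact tsum_nonneg fun k => (hpow k).1 i j
  · intro i j
    rw [← (hSij i j).tsum_eq, ← (hSDij i j).tsum_eq]
    have hsum1 : Summable (fun k => (D ^ k) i j) := (hSDij i j).summable
    have hsum2 : Summable (fun k => ‖(C ^ k) i j‖) := by
      refine Summable.of_nonneg_of_le (fun k => norm_nonneg _) (fun k => ?_) hsum1
      exact (hpow k).2 i j
    calc ‖∑' k : ℕ, (C ^ k) i j‖ = ‖∑' k : ℕ, (C ^ k) i j‖ :=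
          rfl
      _ ≤ ∑' k : ℕ, ‖(C ^ k) i j‖ := norm_tsum_le_tsum_norm hsum2
      _ ≤ ∑' k : ℕ, (D ^ k) i j := by
          refine Summable.tsum_le_tsum (fun k => ?_) hsum2 hsum1
          exact (hpow k).2 i j

/-- An M-matrix has a nonnegative (two-sided) inverse. -/
lemma aux_mmat_inv [Nonempty (Fin n)] {P : Matrix (Fin n) (Fin n) ℝ} (hP : IsMMat P) :
    ∃ Q : Matrix (Fin n) (Fin n) ℝ, (∀ i j, 0 ≤ Q i j) ∧ P * Q = 1 ∧ Q * P = 1 := by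
  obtain ⟨α, hB0, hρ⟩ := hP
  set B := α • (1 : Matrix (Fin n) (Fin n) ℝ) - P with hB
  have hα : 0 < α := lt_of_le_of_lt (aux_specRad_nonneg B) hρ
  set D := α⁻¹ • B with hD
  have hD0 : ∀ i j, 0 ≤ D i j := by
    intro i j
    have := hB0 i j
    rw [hD]
    simp only [Matrix.smul_apply, smul_eq_mul]
    exact mul_nonneg (inv_nonneg.mpr hα.le) this
  have hDmap : D.map Complex.ofReal = ((α : ℂ))⁻¹ • B.map Complex.ofReal := by
    ext i j
    simp only [hD, Matrix.map_apply, Matrix.smul_apply, smul_eq_mul]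
    push_cast
    ring
  have hρD : specRad D < 1 := by
    have hbound : ∀ z ∈ spectrum ℂ (D.map Complex.ofReal), ‖z‖ ≤ specRad B / α := by
      intro z hz
      have hαc : ((α : ℂ)) ≠ 0 := by
        simpa using hα.ne'
      have hzB : (α : ℂ) * z ∈ spectrum ℂ (B.map Complex.ofReal) := by
        rw [hDmap] at hz
        have hsp := spectrum.unit_smul_eq_smul (R := ℂ) (B.map Complex.ofReal)
          (Units.mk0 ((α : ℂ))⁻¹ (inv_ne_zero hαc))
        rw [Units.smul_def, Units.val_mk0] at hsp
        rw [hsp] at hz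
        obtain ⟨w, hw, hwz⟩ := hz
        simp only [Units.smul_def, Units.val_mk0, smul_eq_mul] at hwz
        have hwzz : (α : ℂ) * z = w := by
          rw [← hwz]
          exact mul_inv_cancel_left₀ hαc w
        rwa [hwzz]
      have := aux_abs_le_specRad hzB
      rw [norm_mul, Complex.norm_real, Real.norm_eq_abs, abs_of_pos hα] at this
      exact (le_div_iff₀' hα).mpr this
    refine lt_of_le_of_lt (aux_specRad_le (div_nonneg (aux_specRad_nonneg B) hα.le) hbound) ?_
    rw [div_lt_one hα]
    exact hρ
  obtain ⟨S, SD, -, -, h1, h2, hSD0, -⟩ :=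
    aux_geo (D.map Complex.ofReal) D hD0
      (fun i j => by
        rw [Matrix.map_apply, Complex.norm_real, Real.norm_eq_abs, abs_of_nonneg (hD0 i j)]) hρD
  have hPfact : P = α • (1 - D) := by
    rw [hD, smul_sub, smul_smul, mul_inv_cancel₀ hα.ne', one_smul, hB]
    abel
  refine ⟨α⁻¹ • SD, ?_, ?_, ?_⟩
  · intro i j
    simp only [Matrix.smul_apply, smul_eq_mul]
    exact mul_nonneg (inv_nonneg.mpr hα.le) (hSD0 i j)
  · rw [hPfact, Matrix.smul_mul, Matrix.mul_smul, h1, smul_smul, mul_inv_cancel₀ hα.ne', one_smul]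
  · rw [hPfact, Matrix.smul_mul, Matrix.mul_smul, h2, smul_smul, inv_mul_cancel₀ hα.ne', one_smul]

end Aux

section Key

variable {n : ℕ}

lemma aux_key [Nonempty (Fin n)] (M : Matrix (Fin n) (Fin n) ℂ) (x : Fin n → ℝ)
    (hx : ∀ i, 0 < x i) (h : ∀ i, 0 < (compMat M).mulVec x i) :
    ∃ W : Matrix (Fin n) (Fin n) ℝ, IsUnit M ∧ (∀ i j, 0 ≤ W i j) ∧
      compMat M * W = 1 ∧ W * compMat M = 1 ∧ (∀ i j, ‖M⁻¹ i j‖ ≤ W i j) := by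
  classical
  have hsplit : ∀ i, (compMat M).mulVec x i
      = ‖M i i‖ * x i - ∑ j ∈ Finset.univ.erase i, ‖M i j‖ * x j := by
    intro i
    simp only [Matrix.mulVec, dotProduct]
    rw [← Finset.add_sum_erase _ _ (Finset.mem_univ i)]
    have h1 : compMat M i i * x i = ‖M i i‖ * x i := by simp [compMat]
    have h2 : ∀ j ∈ Finset.univ.erase i, compMat M i j * x j
        = -(‖M i j‖ * x j) := by
      intro j hj
      have hij : i ≠ j := (Finset.ne_of_mem_erase hj).symm
      simp [compMat, hij]
    rw [h1, Finset.sum_congr rfl h2, Finset.sum_neg_distrib]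
    ring
  have herase_nonneg : ∀ i, 0 ≤ ∑ j ∈ Finset.univ.erase i, ‖M i j‖ * x j :=
    fun i => Finset.sum_nonneg fun j _ => mul_nonneg (norm_nonneg _) (hx j).le
  have hdpos : ∀ i, 0 < ‖M i i‖ := by
    intro i
    have h1 := h i
    rw [hsplit i] at h1
    nlinarith [herase_nonneg i, hx i, norm_nonneg (M i i)]
  have hdne : ∀ i, M i i ≠ 0 := by
    intro i h0
    have := hdpos i
    rw [h0, norm_zero] at this
    exact lt_irrefl _ this
  set K : Matrix (Fin n) (Fin n) ℂ := fun i j => if i = j then 0 else -(M i j / M i i) with hK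
  set J : Matrix (Fin n) (Fin n) ℝ := cabs K with hJ
  have hJ0 : ∀ i j, 0 ≤ J i j := fun i j => norm_nonneg _
  have hJentry : ∀ i j, i ≠ j → J i j = ‖M i j‖ / ‖M i i‖ := by
    intro i j hij
    simp only [hJ, hK, cabs]
    rw [if_neg hij, norm_neg, norm_div]
  have hJdiag : ∀ i, J i i = 0 := by
    intro i
    simp [hJ, hK, cabs]
  have hJx : ∀ i, J.mulVec x i < x i := by
    intro i
    have heq : J.mulVec x i
        = (∑ j ∈ Finset.univ.erase i, ‖M i j‖ * x j) / ‖M i i‖ := by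
      simp only [Matrix.mulVec, dotProduct]
      rw [← Finset.add_sum_erase _ _ (Finset.mem_univ i), hJdiag i, zero_mul, zero_add,
        Finset.sum_div]
      refine Finset.sum_congr rfl fun j hj => ?_
      rw [hJentry i j (Finset.ne_of_mem_erase hj).symm, div_mul_eq_mul_div]
    rw [heq, div_lt_iff₀ (hdpos i)]
    have h1 := h i
    rw [hsplit i] at h1
    linarith
  have hρJ : specRad J < 1 := aux_specRad_lt_one hJ0 hx hJx
  obtain ⟨S, SD, hKS, hSK, hJS, hSJ, hSD0, hSabs⟩ :=
    aux_geo K J hJ0 (fun i j => le_of_eq rfl) hρJ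
  set d : Fin n → ℂ := fun i => M i i with hd
  have hMfact : M = Matrix.diagonal d * (1 - K) := by
    ext i j
    rw [Matrix.diagonal_mul]
    by_cases hij : i = j
    · subst hij
      rw [Matrix.sub_apply]
      simp [hK, Matrix.sub_apply, Matrix.one_apply_eq, hd]
    · rw [Matrix.sub_apply]
      simp only [Matrix.sub_apply, Matrix.one_apply_ne hij, hK, hd]
      rw [if_neg hij]
      have := hdne i
      field_simp
      ring
  have hdiaginv : Matrix.diagonal d * Matrix.diagonal (fun i => (d i)⁻¹) = 1 := by
    rw [Matrix.diagonal_mul_diagonal,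
      show (fun i => d i * (d i)⁻¹) = fun _ => (1 : ℂ) from funext fun i =>
        mul_inv_cancel₀ (hdne i), Matrix.diagonal_one]
  have hdiaginv' : Matrix.diagonal (fun i => (d i)⁻¹) * Matrix.diagonal d = 1 := by
    rw [Matrix.diagonal_mul_diagonal,
      show (fun i => (d i)⁻¹ * d i) = fun _ => (1 : ℂ) from funext fun i =>
        inv_mul_cancel₀ (hdne i), Matrix.diagonal_one]
  set V := S * Matrix.diagonal (fun i => (d i)⁻¹) with hV
  have hMV : M * V = 1 := by
    rw [hMfact, hV, mul_assoc, ← mul_assoc (1 - K) S, hKS, one_mul]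
    exact hdiaginv
  have hVM : V * M = 1 := by
    rw [hMfact, hV, mul_assoc, ← mul_assoc (Matrix.diagonal fun i => (d i)⁻¹), hdiaginv',
      one_mul]
    exact hSK
  have hUnit : IsUnit M := ⟨⟨M, V, hMV, hVM⟩, rfl⟩
  have hMinv : M⁻¹ = V := Matrix.inv_eq_right_inv hMV
  have hcomp : compMat M = Matrix.diagonal (fun i => ‖d i‖) * (1 - J) := by
    ext i j
    rw [Matrix.diagonal_mul]
    by_cases hij : i = j
    · subst hij
      simp [compMat, Matrix.sub_apply, Matrix.one_apply_eq, hJdiag i, hd]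
    · simp only [Matrix.sub_apply, Matrix.one_apply_ne hij]
      rw [hJentry i j hij]
      simp only [compMat, if_neg hij, hd]
      have := (hdpos i).ne'
      field_simp
      ring
  have hadiaginv : Matrix.diagonal (fun i => ‖d i‖)
      * Matrix.diagonal (fun i => (‖d i‖)⁻¹) = 1 := by
    rw [Matrix.diagonal_mul_diagonal,
      show (fun i => ‖d i‖ * (‖d i‖)⁻¹) = fun _ => (1 : ℝ) from
        funext fun i => mul_inv_cancel₀ (hdpos i).ne', Matrix.diagonal_one]
  have hadiaginv' : Matrix.diagonal (fun i => (‖d i‖)⁻¹)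
      * Matrix.diagonal (fun i => ‖d i‖) = 1 := by
    rw [Matrix.diagonal_mul_diagonal,
      show (fun i => (‖d i‖)⁻¹ * ‖d i‖) = fun _ => (1 : ℝ) from
        funext fun i => inv_mul_cancel₀ (hdpos i).ne', Matrix.diagonal_one]
  set W := SD * Matrix.diagonal (fun i => (‖d i‖)⁻¹) with hW
  refine ⟨W, hUnit, ?_, ?_, ?_, ?_⟩
  · intro i j
    rw [hW, Matrix.mul_diagonal]
    exact mul_nonneg (hSD0 i j) (inv_nonneg.mpr (norm_nonneg _))
  · rw [hcomp, hW, mul_assoc, ← mul_assoc (1 - J) SD, hJS, one_mul]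
    exact hadiaginv
  · rw [hcomp, hW, mul_assoc, ← mul_assoc (Matrix.diagonal fun i => (‖d i‖)⁻¹),
      hadiaginv', one_mul]
    exact hSJ
  · intro i j
    rw [hMinv, hV, Matrix.mul_diagonal, hW, Matrix.mul_diagonal, norm_mul, norm_inv]
    exact mul_le_mul_of_nonneg_right (hSabs i j) (inv_nonneg.mpr (norm_nonneg _))

end Key

theorem stmt5 {n : ℕ} (A M F : Matrix (Fin n) (Fin n) ℂ)
    (hA : IsHMat A)
    (hM : compMat M - cabs (M - A) = compMat A)
    (hF : compMat F - cabs (F - A) = compMat A) :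
    IsUnit M ∧ IsUnit F ∧
      specRad (cabs (1 - F⁻¹ * (M + F - A) * (M⁻¹ * A))) < 1 := by
  classical
  rcases Nat.eq_zero_or_pos n with hn | hn
  · subst hn
    haveI hsub : Subsingleton (Matrix (Fin 0) (Fin 0) ℂ) := ⟨fun a b => by ext i j; exact i.elim0⟩
    refine ⟨isUnit_of_subsingleton M, isUnit_of_subsingleton F, ?_⟩
    have hempty : spectrum ℂ
        ((cabs (1 - F⁻¹ * (M + F - A) * (M⁻¹ * A))).map Complex.ofReal) = ∅ :=
      Set.eq_empty_iff_forall_notMem.mpr fun z hz =>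
        (spectrum.mem_iff.mp hz) (isUnit_of_subsingleton _)
    rw [specRad, hempty, Set.image_empty, Real.sSup_empty]
    norm_num
  haveI : Nonempty (Fin n) := Fin.pos_iff_nonempty.mp hn
  obtain ⟨Q, hQ0, hAQ, hQA⟩ := aux_mmat_inv hA
  set x : Fin n → ℝ := Q.mulVec (fun _ => 1) with hxdef
  have hx : ∀ i, 0 < x i := aux_rowpos hQ0 hQA
  have hAx : (compMat A).mulVec x = fun _ => (1 : ℝ) := by
    rw [hxdef, Matrix.mulVec_mulVec, hAQ, Matrix.one_mulVec]
  have hMeq : compMat M = compMat A + cabs (M - A) := by rw [← hM]; abel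
  have hFeq : compMat F = compMat A + cabs (F - A) := by rw [← hF]; abel
  have hMx : ∀ i, (compMat M).mulVec x i = 1 + (cabs (M - A)).mulVec x i := by
    intro i
    rw [hMeq, Matrix.add_mulVec]
    simp [hAx]
  have hFx : ∀ i, (compMat F).mulVec x i = 1 + (cabs (F - A)).mulVec x i := by
    intro i
    rw [hFeq, Matrix.add_mulVec]
    simp [hAx]
  have hMxpos : ∀ i, 0 < (compMat M).mulVec x i := by
    intro i
    rw [hMx i]
    have := aux_mulVec_nonneg (aux_cabs_nonneg (M - A)) (fun k => (hx k).le) i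
    linarith
  have hFxpos : ∀ i, 0 < (compMat F).mulVec x i := by
    intro i
    rw [hFx i]
    have := aux_mulVec_nonneg (aux_cabs_nonneg (F - A)) (fun k => (hx k).le) i
    linarith
  obtain ⟨WM, hMunit, hWM0, hMW, hWM, hWMabs⟩ := aux_key M x hx hMxpos
  obtain ⟨WF, hFunit, hWF0, hFW, hWF, hWFabs⟩ := aux_key F x hx hFxpos
  refine ⟨hMunit, hFunit, ?_⟩
  have hMdet : IsUnit M.det := (Matrix.isUnit_iff_isUnit_det M).mp hMunit
  have hFdet : IsUnit F.det := (Matrix.isUnit_iff_isUnit_det F).mp hFunit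
  have hMMinv : M * M⁻¹ = 1 := Matrix.mul_nonsing_inv M hMdet
  have hMinvM : M⁻¹ * M = 1 := Matrix.nonsing_inv_mul M hMdet
  have hFinvF : F⁻¹ * F = 1 := Matrix.nonsing_inv_mul F hFdet
  have e1 : M * (M⁻¹ * A) = A := by rw [← mul_assoc, hMMinv, one_mul]
  have e2 : F⁻¹ * (F * (M⁻¹ * A)) = M⁻¹ * A := by rw [← mul_assoc, hFinvF, one_mul]
  have e3 : M⁻¹ * (M - A) = 1 - M⁻¹ * A := by rw [mul_sub, hMinvM]
  have hT : 1 - F⁻¹ * (M + F - A) * (M⁻¹ * A) = F⁻¹ * ((F - A) * (M⁻¹ * (M - A))) := by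
    have lhs_eq : 1 - F⁻¹ * (M + F - A) * (M⁻¹ * A)
        = 1 - F⁻¹ * A - M⁻¹ * A + F⁻¹ * (A * (M⁻¹ * A)) := by
      rw [mul_assoc, sub_mul, add_mul, e1, mul_sub, mul_add, e2]
      abel
    have rhs_eq : F⁻¹ * ((F - A) * (M⁻¹ * (M - A)))
        = 1 - F⁻¹ * A - M⁻¹ * A + F⁻¹ * (A * (M⁻¹ * A)) := by
      rw [e3, sub_mul, mul_sub F⁻¹, mul_sub F, mul_one, mul_sub F⁻¹, hFinvF, e2,
        mul_sub A, mul_one, mul_sub F⁻¹]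
      abel
    rw [lhs_eq, rhs_eq]
  have hcabsNMx : ∀ i, (cabs (M - A)).mulVec x i = (compMat M).mulVec x i - 1 := by
    intro i
    rw [hMx i]
    ring
  have hcabsNFx : ∀ i, (cabs (F - A)).mulVec x i = (compMat F).mulVec x i - 1 := by
    intro i
    rw [hFx i]
    ring
  have hWMu : ∀ i, WM.mulVec ((cabs (M - A)).mulVec x) i
      = x i - WM.mulVec (fun _ => (1 : ℝ)) i := by
    intro i
    have hu_eq : (cabs (M - A)).mulVec x = (compMat M).mulVec x - (fun _ => (1 : ℝ)) :=
      funext fun k => by rw [Pi.sub_apply, hcabsNMx k]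
    rw [hu_eq, Matrix.mulVec_sub, Pi.sub_apply, Matrix.mulVec_mulVec, hWM, Matrix.one_mulVec]
  have hWFu : ∀ i, WF.mulVec ((cabs (F - A)).mulVec x) i
      = x i - WF.mulVec (fun _ => (1 : ℝ)) i := by
    intro i
    have hu_eq : (cabs (F - A)).mulVec x = (compMat F).mulVec x - (fun _ => (1 : ℝ)) :=
      funext fun k => by rw [Pi.sub_apply, hcabsNFx k]
    rw [hu_eq, Matrix.mulVec_sub, Pi.sub_apply, Matrix.mulVec_mulVec, hWF, Matrix.one_mulVec]
  have hv1le : ∀ i, (cabs (M⁻¹ * (M - A))).mulVec x i ≤ x i := by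
    intro i
    refine le_trans (aux_cabs_mul_mulVec _ _ (fun k => (hx k).le) i) ?_
    refine le_trans (aux_mulVec_mono_mat hWMabs
      (aux_mulVec_nonneg (aux_cabs_nonneg (M - A)) (fun k => (hx k).le)) i) ?_
    rw [hWMu i]
    have := aux_mulVec_nonneg hWM0 (fun _ => zero_le_one) i
    linarith
  have hv2 : ∀ i, (cabs ((F - A) * (M⁻¹ * (M - A)))).mulVec x i
      ≤ (cabs (F - A)).mulVec x i := by
    intro i
    refine le_trans (aux_cabs_mul_mulVec _ _ (fun k => (hx k).le) i) ?_
    exact aux_mulVec_mono_vec (aux_cabs_nonneg (F - A)) hv1le i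
  have hfinal : ∀ i, (cabs (F⁻¹ * ((F - A) * (M⁻¹ * (M - A))))).mulVec x i < x i := by
    intro i
    refine lt_of_le_of_lt (aux_cabs_mul_mulVec _ _ (fun k => (hx k).le) i) ?_
    have hle1 : (cabs F⁻¹).mulVec ((cabs ((F - A) * (M⁻¹ * (M - A)))).mulVec x) i
        ≤ (cabs F⁻¹).mulVec ((cabs (F - A)).mulVec x) i :=
      aux_mulVec_mono_vec (aux_cabs_nonneg F⁻¹) hv2 i
    have hle2 : (cabs F⁻¹).mulVec ((cabs (F - A)).mulVec x) i
        ≤ WF.mulVec ((cabs (F - A)).mulVec x) i :=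
      aux_mulVec_mono_mat hWFabs
        (aux_mulVec_nonneg (aux_cabs_nonneg (F - A)) (fun k => (hx k).le)) i
    have hpos : 0 < WF.mulVec (fun _ => (1 : ℝ)) i := aux_rowpos hWF0 hWF i
    have := hWFu i
    linarith
  rw [hT]
  exact aux_specRad_lt_one (aux_cabs_nonneg _) hx hfinal
end

section
/- Let A be a complex n×n matrix, b ∈ ℂⁿ, and x* ∈ ℂⁿ with A x* = b. Let π : {1,…,n} → {1,…,m} be a map assigning each index to a block, and let M and F be invertible complex n×n matrices that are block diagonal with respect to π, i.e., M_{i,j} = 0 and F_{i,j} = 0 whenever π(i) ≠ π(j). Let Q = [[0, I - M⁻¹A], [I - F⁻¹A, 0]] and assume ρ(|Q|) < 1. Let Ω_k ⊆ {1,…,m} for each k ∈ ℕ be such that every s ∈ {1,…,m} belongs to Ω_k for infinitely many k, and for each s ∈ {1,…,m} let δ_s : {1,…,m} × ℕ → ℕ satisfy δ_s(q,k) ≤ k for all q, k and lim_{k→∞} δ_s(q,k) = ∞ for all q. Let x⁰ ∈ ℂⁿ be arbitrary and define sequences (yᵏ)_{k∈ℕ} and (xᵏ)_{k∈ℕ}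 in ℂⁿ by: for every k and every index i with s := π(i), yᵏ_i := x^{δ_s(s,k)}_i + Σ_j (M⁻¹)_{i,j} (b_j − Σ_l A_{j,l} x^{δ_s(π(l),k)}_l); and x^{k+1}_i := y^{δ_s(s,k)}_i + Σ_j (F⁻¹)_{i,j} (b_j − Σ_l A_{j,l} y^{δ_s(π(l),k)}_l) if s ∈ Ω_k, while x^{k+1}_i := xᵏ_i if s ∉ Ω_k. Then xᵏ converges to x* as k → ∞. -/
open Matrix Filter

section AuxSpec

attribute [local instance] Matrix.linftyOpNormedRing Matrix.linftyOpNormedAlgebra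

lemma aux_pow_norm {N : Type*} [Fintype N] [DecidableEq N] (T : Matrix N N ℝ)
    (hT : specRad T < 1) :
    ∃ k₀ : ℕ, 1 ≤ k₀ ∧ ‖(T.map Complex.ofReal) ^ k₀‖ < 1 := by
  haveI : CompleteSpace (Matrix N N ℂ) :=
    (by infer_instance : CompleteSpace (Matrix N N ℂ))
  set T' := T.map Complex.ofReal with hT'
  have hsr : spectralRadius ℂ T' < 1 := by
    have hbdd : BddAbove ((fun z : ℂ => ‖z‖) '' spectrum ℂ T') := by
      refine ⟨‖T'‖ * ‖(1 : Matrix N N ℂ)‖, ?_⟩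
      rintro r ⟨z, hz, rfl⟩
      exact spectrum.norm_le_norm_mul_of_mem hz
    have : spectralRadius ℂ T' ≤ ENNReal.ofReal (specRad T) := by
      rw [spectralRadius]
      refine iSup₂_le fun z hz => ?_
      have : ‖z‖ ≤ specRad T := le_csSup hbdd ⟨z, hz, rfl⟩
      have h := ENNReal.ofReal_le_ofReal this
      rwa [ofReal_norm, enorm_eq_nnnorm] at h
    exact lt_of_le_of_lt this (by
      exact lt_of_lt_of_le (ENNReal.ofReal_lt_one.mpr hT) le_rfl)
  have hgel := spectrum.pow_nnnorm_pow_one_div_tendsto_nhds_spectralRadius T'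
  have hev : ∀ᶠ k : ℕ in atTop, ((‖T' ^ k‖₊ : ENNReal) ^ (1 / (k:ℝ))) < 1 :=
    hgel.eventually_lt_const hsr
  obtain ⟨k₀, hk₀⟩ := (hev.and (eventually_ge_atTop 1)).exists
  refine ⟨k₀, hk₀.2, ?_⟩
  have h1 : (‖T' ^ k₀‖₊ : ENNReal) < 1 := by
    by_contra h
    push_neg at h
    have h2 : (1:ENNReal) ≤ (‖T' ^ k₀‖₊ : ENNReal) ^ (1 / (k₀:ℝ)) :=
      ENNReal.one_le_rpow h (one_div_pos.mpr (by exact_mod_cast hk₀.2 : (0:ℝ) < k₀))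
    exact absurd hk₀.1 (not_lt.mpr h2)
  have := h1
  simp only [ENNReal.coe_lt_one_iff] at this
  exact_mod_cast this

lemma aux_contraction_vector {N : Type*} [Fintype N] [DecidableEq N] [Nonempty N]
    (T : Matrix N N ℝ) (hpos : ∀ i j, 0 ≤ T i j) (hT : specRad T < 1) :
    ∃ (w : N → ℝ) (γ : ℝ), (∀ i, 0 < w i) ∧ 0 < γ ∧ γ < 1 ∧
      ∀ i, ∑ j, T i j * w j ≤ γ * w i := by
  obtain ⟨k₀, hk₀1, hnorm⟩ := aux_pow_norm T hT
  have hppow : ∀ (p : ℕ) i j, 0 ≤ (T ^ p) i j := by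
    intro p
    induction p with
    | zero => intro i j; by_cases h : i = j <;> simp [Matrix.one_apply, h]
    | succ p ih =>
      intro i j
      rw [pow_succ, Matrix.mul_apply]
      exact Finset.sum_nonneg fun l _ => mul_nonneg (ih i l) (hpos l j)
  set c := ‖(T.map Complex.ofReal) ^ k₀‖ with hc
  have hc0 : 0 ≤ c := norm_nonneg _
  have hmap : (T.map Complex.ofReal) ^ k₀ = (T ^ k₀).map Complex.ofReal := by
    have := map_pow (Complex.ofRealHom.mapMatrix (m := N)) T k₀
    exact this.symm
  have hrow : ∀ i, ∑ j, (T ^ k₀) i j ≤ c := by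
    intro i
    have h1 : (∑ j, ‖((T.map Complex.ofReal) ^ k₀) i j‖₊) ≤ ‖(T.map Complex.ofReal) ^ k₀‖₊ := by
      rw [linfty_opNNNorm_def]
      exact Finset.le_sup (f := fun i => ∑ j, ‖((T.map Complex.ofReal) ^ k₀) i j‖₊)
        (Finset.mem_univ i)
    have h2 : ((∑ j, ‖((T.map Complex.ofReal) ^ k₀) i j‖₊ : NNReal) : ℝ) ≤ c :=
      h1
    calc ∑ j, (T ^ k₀) i j = ∑ j, ‖((T.map Complex.ofReal) ^ k₀) i j‖ := by
          refine Finset.sum_congr rfl fun j _ => ?_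
          rw [hmap]
          simp [Matrix.map_apply, Complex.norm_real, abs_of_nonneg (hppow k₀ i j)]
      _ ≤ c := by simpa [NNReal.coe_sum] using h2
  set rs : ℕ → N → ℝ := fun p i => ∑ j, (T ^ p) i j with hrs
  have hrs0 : ∀ i, rs 0 i = 1 := by
    intro i; simp [hrs, Matrix.one_apply]
  have hrsnn : ∀ p i, 0 ≤ rs p i := fun p i =>
    Finset.sum_nonneg fun j _ => hppow p i j
  set w : N → ℝ := fun i => ∑ p ∈ Finset.range k₀, rs p i with hw
  have hw1 : ∀ i, 1 ≤ w i := by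
    intro i
    calc (1:ℝ) = rs 0 i := (hrs0 i).symm
      _ ≤ w i := Finset.single_le_sum (f := fun p => rs p i)
          (fun p _ => hrsnn p i) (Finset.mem_range.mpr hk₀1)
  have hwpos : ∀ i, 0 < w i := fun i => lt_of_lt_of_le one_pos (hw1 i)
  have hstep : ∀ i, ∑ j, T i j * w j ≤ w i - (1 - c) := by
    intro i
    have inner : ∀ p, ∑ j, T i j * rs p j = rs (p+1) i := by
      intro p
      simp only [hrs, Finset.mul_sum]
      rw [Finset.sum_comm]
      refine Finset.sum_congr rfl fun l _ => ?_
      rw [pow_succ', Matrix.mul_apply]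
    have heq : ∑ j, T i j * w j = ∑ p ∈ Finset.range k₀, rs (p+1) i := by
      calc ∑ j, T i j * w j = ∑ j, ∑ p ∈ Finset.range k₀, T i j * rs p j := by
            simp [hw, Finset.mul_sum]
        _ = ∑ p ∈ Finset.range k₀, ∑ j, T i j * rs p j := Finset.sum_comm
        _ = ∑ p ∈ Finset.range k₀, rs (p+1) i :=
            Finset.sum_congr rfl fun p _ => inner p
    have htel : ∑ p ∈ Finset.range k₀, rs (p+1) i = w i + rs k₀ i - rs 0 i := by
      have h1 := Finset.sum_range_succ (fun p => rs p i) k₀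
      have h2 := Finset.sum_range_succ' (fun p => rs p i) k₀
      simp only [hw]
      rw [← h1] at *
      linarith [h2]
    rw [heq, htel, hrs0]
    have := hrow i
    have : rs k₀ i ≤ c := this
    linarith
  set W : ℝ := Finset.univ.sup' Finset.univ_nonempty w with hW
  have hwW : ∀ i, w i ≤ W := fun i => Finset.le_sup' w (Finset.mem_univ i)
  have hW1 : 1 ≤ W := le_trans (hw1 (Classical.arbitrary N)) (hwW _)
  have hW0 : 0 < W := lt_of_lt_of_le one_pos hW1
  refine ⟨w, max (1 - (1 - c)/W) (1/2), hwpos, ?_, ?_, ?_⟩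
  · exact lt_of_lt_of_le (by norm_num) (le_max_right _ _)
  · have h1 : 0 < (1 - c)/W := div_pos (by linarith) hW0
    exact max_lt (by linarith) (by norm_num)
  · intro i
    have h2 : (1 - c)/W * w i ≤ 1 - c := by
      rw [div_mul_eq_mul_div, div_le_iff₀ hW0]
      have := hwW i
      nlinarith [hwpos i]
    have h3 := hstep i
    have h4 : ∑ j, T i j * w j ≤ (1 - (1 - c)/W) * w i := by
      have hgoal : (1 - (1 - c)/W) * w i = w i - (1 - c)/W * w i := by ring
      rw [hgoal]; linarith
    exact le_trans h4 (mul_le_mul_of_nonneg_right (le_max_left _ _) (le_of_lt (hwpos i)))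

/-- Algebraic error identity for one half-step. -/
lemma aux_err_identity {n : ℕ} (A B : Matrix (Fin n) (Fin n) ℂ)
    (xstar b z : Fin n → ℂ) (hb : ∀ j, b j = ∑ l, A j l * xstar l) (i : Fin n) :
    z i + ∑ j, B i j * (b j - ∑ l, A j l * z l) - xstar i
      = ∑ l, (1 - B * A) i l * (z l - xstar l) := by
  have h1 : ∀ j, b j - ∑ l, A j l * z l = -∑ l, A j l * (z l - xstar l) := by
    intro j
    rw [hb j, ← Finset.sum_neg_distrib, ← Finset.sum_sub_distrib]
    exact Finset.sum_congr rfl fun l _ => by ring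
  have h2 : ∑ j, B i j * (b j - ∑ l, A j l * z l)
      = -∑ l, (∑ j, B i j * A j l) * (z l - xstar l) := by
    simp only [h1, mul_neg, Finset.mul_sum, Finset.sum_neg_distrib]
    rw [Finset.sum_comm]
    congr 1
    refine Finset.sum_congr rfl fun l _ => ?_
    rw [Finset.sum_mul]
    exact Finset.sum_congr rfl fun j _ => by ring
  have h3 : ∑ l, (1 - B * A) i l * (z l - xstar l)
      = (z i - xstar i) - ∑ l, (∑ j, B i j * A j l) * (z l - xstar l) := by
    simp only [Matrix.sub_apply, Matrix.one_apply, Matrix.mul_apply, sub_mul]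
    rw [Finset.sum_sub_distrib]
    congr 1
    simp [Finset.sum_ite_eq]
  rw [h2, h3]
  ring

theorem stmt8 {n m : ℕ}
    (A M F : Matrix (Fin n) (Fin n) ℂ) (b xstar : Fin n → ℂ)
    (hsol : A.mulVec xstar = b)
    (π : Fin n → Fin m)
    (hMunit : IsUnit M) (hFunit : IsUnit F)
    (hMblock : ∀ i j, π i ≠ π j → M i j = 0)
    (hFblock : ∀ i j, π i ≠ π j → F i j = 0)
    (hQ : specRad (cabs (Matrix.fromBlocks 0 (1 - M⁻¹ * A) (1 - F⁻¹ * A) 0)) < 1)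
    (Ω : ℕ → Set (Fin m))
    (hΩ : ∀ s : Fin m, ∀ K : ℕ, ∃ k ≥ K, s ∈ Ω k)
    (δ : Fin m → Fin m → ℕ → ℕ)
    (hδle : ∀ s q k, δ s q k ≤ k)
    (hδlim : ∀ s q, Tendsto (fun k => δ s q k) atTop atTop)
    (x y : ℕ → Fin n → ℂ)
    (hy : ∀ k i, y k i =
      x (δ (π i) (π i) k) i +
        ∑ j, M⁻¹ i j * (b j - ∑ l, A j l * x (δ (π i) (π l) k) l))
    (hupd : ∀ k i, π i ∈ Ω k → x (k + 1) i =
      y (δ (π i) (π i) k) i +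
        ∑ j, F⁻¹ i j * (b j - ∑ l, A j l * y (δ (π i) (π l) k) l))
    (hkeep : ∀ k i, π i ∉ Ω k → x (k + 1) i = x k i) :
    Tendsto x atTop (nhds xstar) := by
  -- trivial case n = 0
  rcases Nat.eq_zero_or_pos n with hn | hn
  · subst hn
    have hxk : ∀ k, x k = xstar := fun k => funext fun i => i.elim0
    exact tendsto_const_nhds.congr fun k => (hxk k).symm
  haveI : Nonempty (Fin n) := ⟨⟨0, hn⟩⟩
  haveI : Nonempty (Fin m) := ⟨π ⟨0, hn⟩⟩
  have hb : ∀ j, b j = ∑ l, A j l * xstar l := by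
    intro j; rw [← hsol]; simp [Matrix.mulVec, dotProduct]
  set Q₁ := 1 - M⁻¹ * A with hQ₁
  set Q₂ := 1 - F⁻¹ * A with hQ₂
  set T := cabs (Matrix.fromBlocks 0 Q₁ Q₂ 0) with hT
  obtain ⟨w, γ, hwpos, hγ0, hγ1, hcon⟩ :=
    aux_contraction_vector T (fun i j => norm_nonneg _) hQ
  set u : Fin n → ℝ := fun i => w (Sum.inr i) with hu
  set v : Fin n → ℝ := fun i => w (Sum.inl i) with hv
  have hupos : ∀ i, 0 < u i := fun i => hwpos _
  have hvpos : ∀ i, 0 < v i := fun i => hwpos _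
  have hAQ1 : ∀ i, ∑ l, ‖Q₁ i l‖ * u l ≤ γ * v i := by
    intro i
    have := hcon (Sum.inl i)
    rw [Fintype.sum_sum_type] at this
    simpa [hT, cabs, hu, hv] using this
  have hAQ2 : ∀ i, ∑ l, ‖Q₂ i l‖ * v l ≤ γ * u i := by
    intro i
    have := hcon (Sum.inr i)
    rw [Fintype.sum_sum_type] at this
    simpa [hT, cabs, hu, hv] using this
  -- error bounds for the two half-steps
  have hyb : ∀ k i, ‖y k i - xstar i‖ ≤
      ∑ l, ‖Q₁ i l‖ * ‖x (δ (π i) (π l) k) l - xstar l‖ := by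
    intro k i
    have hid : y k i - xstar i
        = ∑ l, Q₁ i l * (x (δ (π i) (π l) k) l - xstar l) := by
      rw [hy k i]
      exact aux_err_identity A M⁻¹ xstar b (fun l => x (δ (π i) (π l) k) l) hb i
    rw [hid]
    refine le_trans (norm_sum_le _ _) (le_of_eq ?_)
    exact Finset.sum_congr rfl fun l _ => norm_mul _ _
  have hxb : ∀ k i, π i ∈ Ω k → ‖x (k+1) i - xstar i‖ ≤
      ∑ l, ‖Q₂ i l‖ * ‖y (δ (π i) (π l) k) l - xstar l‖ := by
    intro k i hi
    have hid : x (k+1) i - xstar i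
        = ∑ l, Q₂ i l * (y (δ (π i) (π l) k) l - xstar l) := by
      rw [hupd k i hi]
      exact aux_err_identity A F⁻¹ xstar b (fun l => y (δ (π i) (π l) k) l) hb i
    rw [hid]
    refine le_trans (norm_sum_le _ _) (le_of_eq ?_)
    exact Finset.sum_congr rfl fun l _ => norm_mul _ _
  -- initial bound
  obtain ⟨c0, hc00, hc0b⟩ : ∃ c0, 0 ≤ c0 ∧
      ∀ i, ‖x 0 i - xstar i‖ ≤ c0 * u i := by
    set g : Fin n → ℝ := fun i => ‖x 0 i - xstar i‖ / u i with hg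
    refine ⟨max (Finset.univ.sup' Finset.univ_nonempty g) 0, le_max_right _ _, fun i => ?_⟩
    have h1 : g i ≤ max (Finset.univ.sup' Finset.univ_nonempty g) 0 :=
      le_trans (Finset.le_sup' g (Finset.mem_univ i)) (le_max_left _ _)
    exact (div_le_iff₀ (hupos i)).mp h1
  -- uniform boundedness
  have L1 : ∀ k i, ‖x k i - xstar i‖ ≤ c0 * u i := by
    intro k
    induction k using Nat.strong_induction_on with
    | _ k ih =>
      match k with
      | 0 => exact hc0b
      | (k+1) =>
        intro i
        by_cases hΩi : π i ∈ Ω k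
        · have hybnd : ∀ j, j ≤ k → ∀ l, ‖y j l - xstar l‖ ≤ c0 * v l := by
            intro j hj l
            calc ‖y j l - xstar l‖
                ≤ ∑ l', ‖Q₁ l l'‖ *
                    ‖x (δ (π l) (π l') j) l' - xstar l'‖ := hyb j l
              _ ≤ ∑ l', ‖Q₁ l l'‖ * (c0 * u l') := by
                  refine Finset.sum_le_sum fun l' _ => ?_
                  exact mul_le_mul_of_nonneg_left
                    (ih (δ (π l) (π l') j) (by have := hδle (π l) (π l') j; omega) l')
                    (norm_nonneg _)
              _ = c0 * ∑ l', ‖Q₁ l l'‖ * u l' := by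
                  rw [Finset.mul_sum]
                  exact Finset.sum_congr rfl fun l' _ => by ring
              _ ≤ c0 * (γ * v l) := mul_le_mul_of_nonneg_left (hAQ1 l) hc00
              _ ≤ c0 * v l := by nlinarith [mul_nonneg (mul_nonneg hc00 (hvpos l).le) (sub_nonneg.mpr hγ1.le)]
          calc ‖x (k+1) i - xstar i‖
              ≤ ∑ l, ‖Q₂ i l‖ *
                  ‖y (δ (π i) (π l) k) l - xstar l‖ := hxb k i hΩi
            _ ≤ ∑ l, ‖Q₂ i l‖ * (c0 * v l) := by
                refine Finset.sum_le_sum fun l _ => ?_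
                exact mul_le_mul_of_nonneg_left
                  (hybnd (δ (π i) (π l) k) (hδle _ _ _) l) (norm_nonneg _)
            _ = c0 * ∑ l, ‖Q₂ i l‖ * v l := by
                rw [Finset.mul_sum]
                exact Finset.sum_congr rfl fun l _ => by ring
            _ ≤ c0 * (γ * u i) := mul_le_mul_of_nonneg_left (hAQ2 i) hc00
            _ ≤ c0 * u i := by nlinarith [mul_nonneg (mul_nonneg hc00 (hupos i).le) (sub_nonneg.mpr hγ1.le)]
        · rw [hkeep k i hΩi]
          exact ih k (by omega) i
  -- delays eventually large
  have hdel : ∀ K0 : ℕ, ∃ K1, ∀ k, K1 ≤ k → ∀ s q, K0 ≤ δ s q k := by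
    intro K0
    have hev : ∀ᶠ k in atTop, ∀ s q : Fin m, K0 ≤ δ s q k := by
      rw [eventually_all]
      intro s
      rw [eventually_all]
      intro q
      exact (hδlim s q).eventually_ge_atTop K0
    obtain ⟨K1, hK1⟩ := eventually_atTop.mp hev
    exact ⟨K1, hK1⟩
  -- geometric decay
  have Ldecay : ∀ p : ℕ, ∃ K, ∀ k, K ≤ k →
      ∀ i, ‖x k i - xstar i‖ ≤ γ ^ p * c0 * u i := by
    intro p
    induction p with
    | zero => exact ⟨0, fun k _ i => by simpa using L1 k i⟩
    | succ p ih =>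
      obtain ⟨K, hK⟩ := ih
      set a := γ ^ p * c0 with ha
      have ha0 : 0 ≤ a := mul_nonneg (pow_nonneg (le_of_lt hγ0) p) hc00
      obtain ⟨K1, hK1⟩ := hdel K
      have hY : ∀ k, K1 ≤ k → ∀ l, ‖y k l - xstar l‖ ≤ (γ * a) * v l := by
        intro k hk l
        calc ‖y k l - xstar l‖
            ≤ ∑ l', ‖Q₁ l l'‖ *
                ‖x (δ (π l) (π l') k) l' - xstar l'‖ := hyb k l
          _ ≤ ∑ l', ‖Q₁ l l'‖ * (a * u l') := by
              refine Finset.sum_le_sum fun l' _ => ?_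
              exact mul_le_mul_of_nonneg_left
                (hK (δ (π l) (π l') k) (hK1 k hk (π l) (π l')) l')
                (norm_nonneg _)
          _ = a * ∑ l', ‖Q₁ l l'‖ * u l' := by
              rw [Finset.mul_sum]
              exact Finset.sum_congr rfl fun l' _ => by ring
          _ ≤ a * (γ * v l) := mul_le_mul_of_nonneg_left (hAQ1 l) ha0
          _ = (γ * a) * v l := by ring
      obtain ⟨K2, hK2⟩ := hdel K1
      have hfresh : ∀ k, K2 ≤ k → ∀ i, π i ∈ Ω k →
          ‖x (k+1) i - xstar i‖ ≤ (γ * a) * u i := by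
        intro k hk i hi
        calc ‖x (k+1) i - xstar i‖
            ≤ ∑ l, ‖Q₂ i l‖ *
                ‖y (δ (π i) (π l) k) l - xstar l‖ := hxb k i hi
          _ ≤ ∑ l, ‖Q₂ i l‖ * ((γ * a) * v l) := by
              refine Finset.sum_le_sum fun l _ => ?_
              exact mul_le_mul_of_nonneg_left
                (hY (δ (π i) (π l) k) (hK2 k hk (π i) (π l)) l)
                (norm_nonneg _)
          _ = (γ * a) * ∑ l, ‖Q₂ i l‖ * v l := by
              rw [Finset.mul_sum]
              exact Finset.sum_congr rfl fun l _ => by ring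
          _ ≤ (γ * a) * (γ * u i) :=
              mul_le_mul_of_nonneg_left (hAQ2 i)
                (mul_nonneg (le_of_lt hγ0) ha0)
          _ ≤ (γ * a) * u i := by nlinarith [mul_nonneg (mul_nonneg (mul_nonneg hγ0.le ha0) (hupos i).le) (sub_nonneg.mpr hγ1.le)]
      -- pick update times for every block
      have hks : ∀ s : Fin m, ∃ ks, K2 ≤ ks ∧ s ∈ Ω ks := by
        intro s
        obtain ⟨k, hk1, hk2⟩ := hΩ s K2
        exact ⟨k, hk1, hk2⟩
      choose ks hks1 hks2 using hks
      have hstay : ∀ i d, ‖x (ks (π i) + 1 + d) i - xstar i‖ ≤ (γ * a) * u i := by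
        intro i d
        induction d with
        | zero => exact hfresh (ks (π i)) (hks1 _) i (hks2 _)
        | succ d ihd =>
          have hbig : K2 ≤ ks (π i) + 1 + d := by have := hks1 (π i); omega
          by_cases hi : π i ∈ Ω (ks (π i) + 1 + d)
          · exact hfresh _ hbig i hi
          · have := hkeep (ks (π i) + 1 + d) i hi
            rw [show ks (π i) + 1 + (d+1) = (ks (π i) + 1 + d) + 1 from rfl, this]
            exact ihd
      refine ⟨(Finset.univ.sup ks) + 1, fun k hk i => ?_⟩
      have h1 : ks (π i) + 1 ≤ k := by
        have := Finset.le_sup (f := ks) (Finset.mem_univ (π i))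
        omega
      obtain ⟨d, hd⟩ : ∃ d, k = ks (π i) + 1 + d := ⟨k - (ks (π i) + 1), by omega⟩
      have heq : γ ^ (p+1) * c0 = γ * a := by rw [pow_succ]; ring
      rw [heq, hd]
      exact hstay i d
  -- conclude
  rw [tendsto_pi_nhds]
  intro i
  rw [Metric.tendsto_atTop]
  intro ε hε
  have htend : Tendsto (fun p : ℕ => γ ^ p * (c0 * u i)) atTop (nhds 0) := by
    simpa using
      (tendsto_pow_atTop_nhds_zero_of_lt_one (le_of_lt hγ0) hγ1).mul_const (c0 * u i)
  obtain ⟨p, hp⟩ := (htend.eventually (gt_mem_nhds hε)).exists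
  obtain ⟨K, hK⟩ := Ldecay p
  refine ⟨K, fun k hk => ?_⟩
  rw [Complex.dist_eq]
  calc ‖x k i - xstar i‖ ≤ γ ^ p * c0 * u i := hK k hk i
    _ = γ ^ p * (c0 * u i) := by ring
    _ < ε := hp
end AuxSpec
end

section
/- Let f : (ℂⁿ)ᵖ → ℂⁿ be a map and suppose there exists a real n×n matrix 𝒫 with 𝒫 ≥ 0 entrywise, ρ(𝒫) < 1, and such that for all collections X = (X_1,…,X_p) and Y = (Y_1,…,Y_p) of p vectors in ℂⁿ, |f(X) − f(Y)| ≤ 𝒫 · max(|X_1 − Y_1|, …, |X_p − Y_p|) entrywise, where max denotes the entrywise maximum of vectors. Let π : {1,…,n} → {1,…,m} be a map assigning each index to a block. Let Ω_k ⊆ {1,…,m} for each k ∈ ℕ be such that every s ∈ {1,…,m} belongs to Ω_k for infinitely many k, and for each s ∈ {1,…,m} and t ∈ {1,…,p} let δ_{s,t} : {1,…,m} × ℕ → ℕ satisfy δ_{s,t}(q,k) ≤ k for all q, k and lim_{k→∞} δ_{s,t}(q,k) = ∞ for all q. Let x⁰ ∈ ℂⁿ be arbitrary and define the sequence (xᵏ)_{k∈ℕ}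 in ℂⁿ by: for every k and every index i with s := π(i), x^{k+1}_i := f_i(Z_1, …, Z_p) if s ∈ Ω_k, where for each t ∈ {1,…,p} the vector Z_t ∈ ℂⁿ has components (Z_t)_j := x^{δ_{s,t}(π(j),k)}_j, while x^{k+1}_i := xᵏ_i if s ∉ Ω_k. Then there exists x* ∈ ℂⁿ with f(x*,…,x*) = x* and xᵏ converges to x* as k → ∞. -/
open Matrix Filter

open scoped ENNReal NNReal

section Key
attribute [local instance] Matrix.linftyOpNormedAddCommGroup Matrix.linftyOpNormedRing
  Matrix.linftyOpNormedAlgebra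

lemma key_vec {n : ℕ} (P : Matrix (Fin n) (Fin n) ℝ) (hP : ∀ i j, 0 ≤ P i j)
    (hρ : specRad P < 1) :
    ∃ (θ : ℝ) (v : Fin n → ℝ), 0 < θ ∧ θ < 1 ∧ (∀ i, 1 ≤ v i) ∧
      ∀ i, ∑ j, P i j * v j ≤ θ * v i := by
  haveI : CompleteSpace (Matrix (Fin n) (Fin n) ℂ) :=
    inferInstance
  rcases Nat.eq_zero_or_pos n with hn | hn
  · subst hn
    exact ⟨1/2, fun _ => 1, by norm_num, by norm_num, fun i => i.elim0, fun i => i.elim0⟩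
  haveI : Nonempty (Fin n) := ⟨⟨0, hn⟩⟩
  set A := P.map Complex.ofReal with hA
  have hfin : ((fun z : ℂ => ‖z‖) '' spectrum ℂ A).Finite :=
    (Matrix.finite_spectrum A).image _
  have hne : ((fun z : ℂ => ‖z‖) '' spectrum ℂ A).Nonempty :=
    (spectrum.nonempty A).image _
  have hub : ∀ z ∈ spectrum ℂ A, ‖z‖ ≤ specRad P := fun z hz =>
    le_csSup hfin.bddAbove ⟨z, hz, rfl⟩
  have hρ0 : 0 ≤ specRad P := by
    obtain ⟨y, hy⟩ := hne
    have h1 := le_csSup hfin.bddAbove hy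
    rcases hy with ⟨z, hz, rfl⟩
    exact (norm_nonneg z).trans h1
  set ρ0 := specRad P
  set θ1 := (2*ρ0+1)/3 with hθ1
  set θ := (ρ0+2)/3 with hθ
  have hρθ1 : ρ0 < θ1 := by rw [hθ1]; linarith
  have hθ1θ : θ1 < θ := by rw [hθ1, hθ]; linarith
  have hθlt1 : θ < 1 := by rw [hθ]; linarith
  have hθ1pos : 0 < θ1 := by rw [hθ1]; linarith
  have hθpos : 0 < θ := by rw [hθ]; linarith
  have hsr : spectralRadius ℂ A ≤ ENNReal.ofReal ρ0 := by
    rw [spectralRadius]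
    refine iSup₂_le fun z hz => ?_
    rw [← ENNReal.ofReal_coe_nnreal, coe_nnnorm]
    exact ENNReal.ofReal_le_ofReal (hub z hz)
  have hsr1 : spectralRadius ℂ A < ENNReal.ofReal θ1 :=
    lt_of_le_of_lt hsr (by rw [ENNReal.ofReal_lt_ofReal_iff hθ1pos]; exact hρθ1)
  have hgel := spectrum.pow_nnnorm_pow_one_div_tendsto_nhds_spectralRadius A
  have hev := hgel.eventually_lt_const hsr1
  obtain ⟨K, hK⟩ := eventually_atTop.mp hev
  have hnorm : ∀ k : ℕ, K ≤ k → 1 ≤ k → ‖A ^ k‖ ≤ θ1 ^ k := by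
    intro k hk1 hk2
    have hk0 : (k : ℝ) ≠ 0 := by positivity
    have h := (hK k hk1).le
    have h2 : ((‖A ^ k‖₊ : ℝ≥0∞) ^ ((1:ℝ) / k)) ^ (k:ℝ) ≤ (ENNReal.ofReal θ1) ^ (k:ℝ) :=
      ENNReal.rpow_le_rpow h (Nat.cast_nonneg k)
    rw [← ENNReal.rpow_mul, one_div, inv_mul_cancel₀ hk0, ENNReal.rpow_one,
      ENNReal.ofReal_rpow_of_pos hθ1pos, Real.rpow_natCast,
      ← ENNReal.ofReal_coe_nnreal, coe_nnnorm] at h2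
    exact (ENNReal.ofReal_le_ofReal_iff (by positivity)).mp h2
  -- nonneg entries of powers
  have hPk : ∀ k : ℕ, ∀ i j, 0 ≤ (P ^ k) i j := by
    intro k
    induction k with
    | zero => intro i j; by_cases h : i = j <;> simp [pow_zero, Matrix.one_apply, h]
    | succ k ih =>
        intro i j
        rw [pow_succ, Matrix.mul_apply]
        exact Finset.sum_nonneg fun l _ => mul_nonneg (ih i l) (hP l j)
  have hmap : ∀ k : ℕ, A ^ k = (P ^ k).map Complex.ofReal := by
    intro k
    have := map_pow (RingHom.mapMatrix Complex.ofRealHom :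
      Matrix (Fin n) (Fin n) ℝ →+* Matrix (Fin n) (Fin n) ℂ) P k
    have e : (⇑Complex.ofRealHom : ℝ → ℂ) = Complex.ofReal := rfl
    simpa [RingHom.mapMatrix_apply, hA, e] using this.symm
  -- row sums bounded by norm
  have hrow : ∀ k : ℕ, ∀ i, ∑ j, (P ^ k) i j ≤ ‖A ^ k‖ := by
    intro k i
    have h1 : (∑ j, ‖(A ^ k) i j‖₊ : ℝ≥0) ≤ ‖A ^ k‖₊ := by
      rw [Matrix.linfty_opNNNorm_def]
      exact Finset.le_sup (f := fun i => ∑ j, ‖(A ^ k) i j‖₊) (Finset.mem_univ i)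
    have h2 : ∑ j, (P ^ k) i j = ((∑ j, ‖(A ^ k) i j‖₊ : ℝ≥0) : ℝ) := by
      push_cast
      refine Finset.sum_congr rfl fun j _ => ?_
      rw [hmap k]
      simp [Matrix.map_apply, Complex.norm_real, Real.norm_eq_abs,
        abs_of_nonneg (hPk k i j)]
    rw [h2]
    exact_mod_cast h1
  -- define u and v
  set u : ℕ → Fin n → ℝ := fun k i => θ⁻¹ ^ k * ((P ^ k) *ᵥ fun _ => (1:ℝ)) i with hu
  have humv : ∀ k i, u k i = θ⁻¹ ^ k * ∑ j, (P ^ k) i j := by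
    intro k i; simp [hu, Matrix.mulVec, dotProduct]
  have hupos : ∀ k i, 0 ≤ u k i := fun k i => by
    rw [humv]
    exact mul_nonneg (by positivity) (Finset.sum_nonneg fun j _ => hPk k i j)
  set K1 := max K 1 with hK1
  have hsummable : ∀ i, Summable fun k => u k i := by
    intro i
    rw [← summable_nat_add_iff K1]
    have hr : (0:ℝ) ≤ θ1 / θ := by positivity
    have hr1 : θ1 / θ < 1 := (div_lt_one hθpos).mpr hθ1θ
    refine Summable.of_nonneg_of_le (fun k => hupos _ i) (fun k => ?_)
      (((summable_geometric_of_lt_one hr hr1)).mul_left ((θ1/θ) ^ K1))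
    have hk1 : K ≤ k + K1 := le_trans (le_max_left _ _) (Nat.le_add_left _ _)
    have hk2 : 1 ≤ k + K1 := le_trans (le_max_right _ _) (Nat.le_add_left _ _)
    have := hrow (k + K1) i
    rw [humv]
    calc θ⁻¹ ^ (k + K1) * ∑ j, (P ^ (k + K1)) i j
        ≤ θ⁻¹ ^ (k + K1) * θ1 ^ (k + K1) := by
          exact mul_le_mul_of_nonneg_left (this.trans (hnorm _ hk1 hk2)) (by positivity)
      _ = (θ1 * θ⁻¹) ^ (k + K1) := by rw [mul_pow]; ring
      _ = (θ1/θ) ^ (k + K1) := by rw [div_eq_mul_inv]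
      _ = (θ1/θ) ^ K1 * (θ1/θ) ^ k := by rw [pow_add, mul_comm]
  set v : Fin n → ℝ := fun i => ∑' k, u k i with hv
  have hv1 : ∀ i, 1 ≤ v i := by
    intro i
    have h0 : u 0 i = 1 := by simp [humv, Matrix.one_apply]
    calc (1:ℝ) = u 0 i := h0.symm
      _ ≤ v i := Summable.le_tsum (hsummable i) 0 fun j _ => hupos j i
  refine ⟨θ, v, hθpos, hθlt1, hv1, fun i => ?_⟩
  have hrec : ∀ k, ∑ j, P i j * u k j = θ * u (k+1) i := by
    intro k
    have : ∑ j, P i j * u k j = θ⁻¹ ^ k * ∑ j, P i j * ((P ^ k) *ᵥ fun _ => (1:ℝ)) j := by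
      rw [Finset.mul_sum]; exact Finset.sum_congr rfl fun j _ => by rw [hu]; ring
    rw [this]
    have hmv : ∑ j, P i j * ((P ^ k) *ᵥ fun _ => (1:ℝ)) j
        = ((P ^ (k+1)) *ᵥ fun _ => (1:ℝ)) i := by
      rw [pow_succ']
      rw [← Matrix.mulVec_mulVec]
      simp [Matrix.mulVec, dotProduct]
    rw [hmv, hu]
    have : θ * (θ⁻¹ ^ (k+1)) = θ⁻¹ ^ k := by
      rw [pow_succ, mul_comm (θ⁻¹ ^ k), ← mul_assoc, mul_inv_cancel₀ (ne_of_gt hθpos), one_mul]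
    rw [← this]; ring
  have hswap : ∑ j, P i j * v j = ∑' k, ∑ j, P i j * u k j := by
    calc ∑ j, P i j * v j = ∑ j, ∑' k, P i j * u k j :=
          Finset.sum_congr rfl fun j _ => by rw [hv]; exact (tsum_mul_left).symm
      _ = ∑' k, ∑ j, P i j * u k j :=
          (Summable.tsum_finsetSum (fun j _ => (hsummable j).mul_left (P i j))).symm
  rw [hswap]
  have h2 : ∑' k, ∑ j, P i j * u k j = θ * ∑' k, u (k+1) i := by
    rw [← tsum_mul_left]
    exact tsum_congr fun k => hrec k
  rw [h2]
  have h3 : ∑' k, u (k+1) i = v i - u 0 i := by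
    have := Summable.tsum_eq_zero_add (hsummable i)
    rw [hv]; linarith [this]
  rw [h3]
  have h0 : u 0 i = 1 := by simp [humv, Matrix.one_apply]
  rw [h0]
  nlinarith [hv1 i, hθpos]
end Key

theorem stmt10 {n m p : ℕ}
    (f : (Fin p → (Fin n → ℂ)) → (Fin n → ℂ))
    (P : Matrix (Fin n) (Fin n) ℝ)
    (hPnonneg : ∀ i j, 0 ≤ P i j)
    (hPρ : specRad P < 1)
    (hLip : ∀ X Y : Fin p → (Fin n → ℂ), ∀ i,
      ‖f X i - f Y i‖ ≤
        ∑ j, P i j * (⨆ t, ‖X t j - Y t j‖))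
    (π : Fin n → Fin m)
    (Ω : ℕ → Set (Fin m))
    (hΩ : ∀ s : Fin m, ∀ K : ℕ, ∃ k ≥ K, s ∈ Ω k)
    (δ : Fin m → Fin p → Fin m → ℕ → ℕ)
    (hδle : ∀ s t q k, δ s t q k ≤ k)
    (hδlim : ∀ s t q, Tendsto (fun k => δ s t q k) atTop atTop)
    (x : ℕ → Fin n → ℂ)
    (hupd : ∀ k i, π i ∈ Ω k →
      x (k + 1) i = f (fun t j => x (δ (π i) t (π j) k) j) i)
    (hkeep : ∀ k i, π i ∉ Ω k → x (k + 1) i = x k i) :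
    ∃ xstar : Fin n → ℂ, f (fun _ => xstar) = xstar ∧
      Tendsto x atTop (nhds xstar) := by
  rcases Nat.eq_zero_or_pos n with hn | hn
  · subst hn
    refine ⟨x 0, Subsingleton.elim _ _, ?_⟩
    have hx : x = fun _ => x 0 := funext fun k => Subsingleton.elim _ _
    rw [hx]; exact tendsto_const_nhds
  obtain ⟨θ, v, hθpos, hθlt1, hv1, hPv⟩ := key_vec P hPnonneg hPρ
  have hvpos : ∀ i, 0 < v i := fun i => lt_of_lt_of_le one_pos (hv1 i)
  set V : Fin n → ℂ := fun i => (v i : ℂ) with hV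
  have hVne : ∀ i, V i ≠ 0 := fun i => by
    simp only [hV, Complex.ofReal_ne_zero]
    exact ne_of_gt (hvpos i)
  have habsV : ∀ i, ‖V i‖ = v i := fun i => by
    simp [hV, Complex.norm_real, Real.norm_eq_abs, abs_of_pos (hvpos i)]
  set g' : (Fin n → ℂ) → (Fin n → ℂ) := fun z i => f (fun _ j => V j * z j) i / V i with hg'
  have hlip' : ∀ z w : Fin n → ℂ, dist (g' z) (g' w) ≤ θ * dist z w := by
    intro z w
    rw [dist_pi_le_iff (by positivity)]
    intro i
    rw [hg']
    simp only
    rw [Complex.dist_eq, div_sub_div_same, norm_div, habsV, div_le_iff₀ (hvpos i)]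
    calc ‖f (fun _ j => V j * z j) i - f (fun _ j => V j * w j) i‖
        ≤ ∑ j, P i j * (⨆ t, ‖V j * z j - V j * w j‖) := hLip _ _ i
      _ ≤ ∑ j, P i j * (v j * dist z w) := by
          refine Finset.sum_le_sum fun j _ => mul_le_mul_of_nonneg_left ?_ (hPnonneg i j)
          refine Real.iSup_le (fun t => ?_) (mul_nonneg (hvpos j).le dist_nonneg)
          rw [← mul_sub, norm_mul, habsV]
          have h1 : ‖z j - w j‖ ≤ dist z w := by
            rw [← Complex.dist_eq]; exact dist_le_pi_dist z w j
          exact mul_le_mul_of_nonneg_left h1 (hvpos j).le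
      _ = (∑ j, P i j * v j) * dist z w := by
          rw [Finset.sum_mul]; exact Finset.sum_congr rfl fun j _ => by ring
      _ ≤ (θ * v i) * dist z w := mul_le_mul_of_nonneg_right (hPv i) dist_nonneg
      _ = θ * dist z w * v i := by ring
  have hcontr : ContractingWith θ.toNNReal g' := by
    constructor
    · rw [← Real.toNNReal_one]
      exact (Real.toNNReal_lt_toNNReal_iff one_pos).mpr hθlt1
    · refine LipschitzWith.of_dist_le_mul fun z w => ?_
      calc dist (g' z) (g' w) ≤ θ * dist z w := hlip' z w
        _ = (θ.toNNReal : ℝ) * dist z w := by rw [Real.coe_toNNReal _ hθpos.le]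
  set zs := ContractingWith.fixedPoint g' hcontr with hzsdef
  have hzs : g' zs = zs := hcontr.fixedPoint_isFixedPt
  set xstar : Fin n → ℂ := fun i => V i * zs i with hxs
  have hfix : f (fun _ => xstar) = xstar := by
    funext i
    have h1 : g' zs i = zs i := congrFun hzs i
    rw [hg'] at h1
    simp only at h1
    have h2 : f (fun _ j => V j * zs j) i = V i * zs i := by
      rw [div_eq_iff (hVne i)] at h1
      rw [h1]; ring
    have h3 : (fun (_ : Fin p) => xstar) = fun _ j => V j * zs j := rfl
    rw [h3, h2, hxs]
  -- derived Lipschitz bound towards the fixed point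
  have hLipstar : ∀ (X : Fin p → Fin n → ℂ) i, ‖f X i - xstar i‖ ≤
      ∑ j, P i j * ⨆ t, ‖X t j - xstar j‖ := by
    intro X i
    have h := hLip X (fun _ => xstar) i
    rwa [hfix] at h
  have hstep : ∀ (c : ℝ), 0 ≤ c → ∀ k i, π i ∈ Ω k →
      (∀ t j, ‖x (δ (π i) t (π j) k) j - xstar j‖ ≤ c * v j) →
      ‖x (k+1) i - xstar i‖ ≤ θ * c * v i := by
    intro c hc k i hmem hprev
    rw [hupd k i hmem]
    calc ‖f (fun t j => x (δ (π i) t (π j) k) j) i - xstar i‖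
        ≤ ∑ j, P i j * ⨆ t, ‖x (δ (π i) t (π j) k) j - xstar j‖ := hLipstar _ i
      _ ≤ ∑ j, P i j * (c * v j) := by
          refine Finset.sum_le_sum fun j _ => mul_le_mul_of_nonneg_left ?_ (hPnonneg i j)
          exact Real.iSup_le (fun t => hprev t j) (mul_nonneg hc (hvpos j).le)
      _ = c * ∑ j, P i j * v j := by
          rw [Finset.mul_sum]; exact Finset.sum_congr rfl fun j _ => by ring
      _ ≤ c * (θ * v i) := mul_le_mul_of_nonneg_left (hPv i) hc
      _ = θ * c * v i := by ring
  set C₀ : ℝ := ∑ i, ‖x 0 i - xstar i‖ with hC₀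
  have hC0 : 0 ≤ C₀ := Finset.sum_nonneg fun i _ => norm_nonneg _
  have claim1 : ∀ k, ∀ i, ‖x k i - xstar i‖ ≤ C₀ * v i := by
    intro k
    induction k using Nat.strong_induction_on with
    | _ k IH =>
      intro i
      rcases k with _ | k
      · calc ‖x 0 i - xstar i‖ ≤ C₀ :=
              Finset.single_le_sum (f := fun i => ‖x 0 i - xstar i‖)
                (fun i _ => norm_nonneg _) (Finset.mem_univ i)
          _ ≤ C₀ * v i := le_mul_of_one_le_right hC0 (hv1 i)
      · by_cases hmem : π i ∈ Ω k
        · have h := hstep C₀ hC0 k i hmem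
            (fun t j => IH _ (Nat.lt_succ_of_le (hδle _ _ _ _)) j)
          refine h.trans ?_
          have h2 : θ * C₀ ≤ C₀ := by nlinarith
          exact mul_le_mul_of_nonneg_right h2 (hvpos i).le
        · rw [hkeep k i hmem]; exact IH k (Nat.lt_succ_self k) i
  have claim2 : ∀ r : ℕ, ∃ K, ∀ k, K ≤ k → ∀ i,
      ‖x k i - xstar i‖ ≤ θ ^ r * C₀ * v i := by
    intro r
    induction r with
    | zero => exact ⟨0, fun k _ i => by simpa using claim1 k i⟩
    | succ r ih =>
      obtain ⟨K, hKr⟩ := ih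
      have hex : ∀ s t q, ∃ N, ∀ k ≥ N, K ≤ δ s t q k := fun s t q =>
        eventually_atTop.mp ((hδlim s t q).eventually_ge_atTop K)
      choose N hN using hex
      set K' := Finset.univ.sup fun sq : Fin m × Fin p × Fin m => N sq.1 sq.2.1 sq.2.2 with hK'def
      have hK' : ∀ k, K' ≤ k → ∀ s t q, K ≤ δ s t q k := fun k hk s t q =>
        hN s t q k (le_trans (Finset.le_sup
          (f := fun sq : Fin m × Fin p × Fin m => N sq.1 sq.2.1 sq.2.2)
          (Finset.mem_univ (s,t,q))) hk)
      have hstep2 : ∀ k, K' ≤ k → ∀ i, π i ∈ Ω k →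
          ‖x (k+1) i - xstar i‖ ≤ θ ^ (r+1) * C₀ * v i := by
        intro k hk i hmem
        have h := hstep (θ ^ r * C₀) (by positivity) k i hmem
          (fun t j => by
            have hdel : K ≤ δ (π i) t (π j) k := hK' k hk (π i) t (π j)
            have := hKr _ hdel j
            calc ‖x (δ (π i) t (π j) k) j - xstar j‖
                ≤ θ ^ r * C₀ * v j := this
              _ = θ ^ r * C₀ * v j := rfl)
        calc ‖x (k+1) i - xstar i‖ ≤ θ * (θ ^ r * C₀) * v i := h
          _ = θ ^ (r+1) * C₀ * v i := by rw [pow_succ]; ring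
      choose ks hks1 hks2 using fun s => hΩ s K'
      refine ⟨(Finset.univ.sup ks) + 1, fun k hk i => ?_⟩
      have hkk : ks (π i) + 1 ≤ k := by
        have h1 : ks (π i) ≤ Finset.univ.sup ks := Finset.le_sup (Finset.mem_univ _)
        omega
      clear hk
      induction k, hkk using Nat.le_induction with
      | base => exact hstep2 _ (hks1 _) i (hks2 _)
      | succ k hkk IH =>
        by_cases hmem : π i ∈ Ω k
        · exact hstep2 k (le_trans (hks1 (π i)) (Nat.le_of_succ_le hkk)) i hmem
        · rw [hkeep k i hmem]; exact IH
  refine ⟨xstar, hfix, ?_⟩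
  rw [tendsto_pi_nhds]
  intro i
  rw [Metric.tendsto_atTop]
  intro ε hε
  have htz : Tendsto (fun r : ℕ => θ ^ r * (C₀ * v i)) atTop (nhds 0) := by
    simpa using (tendsto_pow_atTop_nhds_zero_of_lt_one hθpos.le hθlt1).mul_const (C₀ * v i)
  obtain ⟨r, hr⟩ := (htz.eventually (gt_mem_nhds hε)).exists
  obtain ⟨K, hK⟩ := claim2 r
  refine ⟨K, fun k hk => ?_⟩
  rw [Complex.dist_eq]
  calc ‖x k i - xstar i‖ ≤ θ ^ r * C₀ * v i := hK k hk i
    _ = θ ^ r * (C₀ * v i) := by ring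
    _ < ε := hr
end
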